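/- arXiv:1001.4909 — 3 statements merged into one kernel-verified Lean document; each statement's English description precedes it below -/
import Mathlib

section
/- Let l ∈ (ℤ∖{0})^n and F_1 = Σ_j l_j I_j. Every real polynomial f in the variables (x_1,…,x_n,p_1,…,p_n) satisfying {F_1, f} = 0 is a real linear combination of the functions Re P_{a,b} and Im P_{a,b}, where P_{a,b} = Π_j z_j^{a_j} z̄_j^{b_j} and a, b range over multi-indices in ℤ_{≥0}^n with Σ_j l_j (a_j − b_j) = 0. -/
noncomputable section

open Complex

/-- Phase space `ℝ^{2n}`: a point is a pair `(x, p)` of vectors in `ℝ^n`. -/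
abbrev Phase (n : ℕ) : Type := (Fin n → ℝ) × (Fin n → ℝ)

/-- Poisson bracket of complex-valued functions on phase space:
`{f,g} = ∑ j (∂f/∂p_j ∂g/∂x_j − ∂f/∂x_j ∂g/∂p_j)`. -/
def pb {n : ℕ} (f g : Phase n → ℂ) : Phase n → ℂ := fun w =>
  ∑ j : Fin n,
    (fderiv ℝ f w ((0 : Fin n → ℝ), Pi.single j (1 : ℝ)) *
        fderiv ℝ g w (Pi.single j (1 : ℝ), (0 : Fin n → ℝ)) -
      fderiv ℝ f w (Pi.single j (1 : ℝ), (0 : Fin n → ℝ)) *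
        fderiv ℝ g w ((0 : Fin n → ℝ), Pi.single j (1 : ℝ)))

/-- Poisson bracket of real-valued functions on phase space. -/
def pbR {n : ℕ} (f g : Phase n → ℝ) : Phase n → ℝ := fun w =>
  ∑ j : Fin n,
    (fderiv ℝ f w ((0 : Fin n → ℝ), Pi.single j (1 : ℝ)) *
        fderiv ℝ g w (Pi.single j (1 : ℝ), (0 : Fin n → ℝ)) -
      fderiv ℝ f w (Pi.single j (1 : ℝ), (0 : Fin n → ℝ)) *
        fderiv ℝ g w ((0 : Fin n → ℝ), Pi.single j (1 : ℝ)))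

/-- `z_j = (x_j + i p_j)/√2`. -/
def zf {n : ℕ} (j : Fin n) (w : Phase n) : ℂ :=
  ((w.1 j : ℂ) + Complex.I * (w.2 j : ℂ)) / ((Real.sqrt 2 : ℝ) : ℂ)

/-- `z̄_j = (x_j − i p_j)/√2`. -/
def zbf {n : ℕ} (j : Fin n) (w : Phase n) : ℂ :=
  ((w.1 j : ℂ) - Complex.I * (w.2 j : ℂ)) / ((Real.sqrt 2 : ℝ) : ℂ)

/-- `I_j = z_j z̄_j` (complex-valued; its values are real). -/
def Iact {n : ℕ} (j : Fin n) (w : Phase n) : ℂ := zf j w * zbf j w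

/-- `I_j = (x_j² + p_j²)/2` (real-valued). -/
def IR {n : ℕ} (j : Fin n) (w : Phase n) : ℝ := (w.1 j ^ 2 + w.2 j ^ 2) / 2

/-- A family of real functions on phase space is functionally independent if their
differentials are linearly independent at every point of some dense open set. -/
def FunctionallyIndependent {n : ℕ} {ι : Type*} (f : ι → Phase n → ℝ) : Prop :=
  ∃ U : Set (Phase n), IsOpen U ∧ Dense U ∧
    ∀ w ∈ U, LinearIndependent ℝ (fun i => fderiv ℝ (f i) w)

/-- The monomial `P_{a,b} = ∏_j z_j^{a_j} z̄_j^{b_j}`. -/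
def Pab {n : ℕ} (a b : Fin n → ℕ) (w : Phase n) : ℂ :=
  ∏ j : Fin n, zf j w ^ a j * zbf j w ^ b j

/-- `R_m = ∏_j ζ_j^{m_j}`, with `ζ_j^{m_j} = z_j^{m_j}` for `m_j ≥ 0` and
`ζ_j^{m_j} = z̄_j^{−m_j}` for `m_j < 0`. -/
def Rm {n : ℕ} (m : Fin n → ℤ) (w : Phase n) : ℂ :=
  ∏ j : Fin n, if 0 ≤ m j then zf j w ^ (m j).toNat else zbf j w ^ (-(m j)).toNat

/-- `w_i = z_i` if `ε_i = 1`, `w_i = z̄_i` if `ε_i = −1`. -/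
def wfun {n : ℕ} (ε : Fin n → ℤ) (i : Fin n) (w : Phase n) : ℂ :=
  if ε i = 1 then zf i w else zbf i w

/-- `w̄_i`, the complex conjugate of `w_i`. -/
def wbfun {n : ℕ} (ε : Fin n → ℤ) (i : Fin n) (w : Phase n) : ℂ :=
  if ε i = 1 then zbf i w else zf i w

/-- `P_{ij} = i(w_i w̄_j − w_j w̄_i)` (complex-valued; its values are real). -/
def Pf {n : ℕ} (ε : Fin n → ℤ) (i j : Fin n) (w : Phase n) : ℂ :=
  Complex.I * (wfun ε i w * wbfun ε j w - wfun ε j w * wbfun ε i w)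

/-- `P_{ij}` as a real-valued function. -/
def PfR {n : ℕ} (ε : Fin n → ℤ) (i j : Fin n) (w : Phase n) : ℝ :=
  (Pf ε i j w).re


namespace Stmt1Aux

open MvPolynomial ContinuousLinearMap

variable {n : ℕ}

/-- `√2` as a complex number. -/
def s2 : ℂ := ((Real.sqrt 2 : ℝ) : ℂ)

lemma s2_sq : s2 * s2 = 2 := by
  have : Real.sqrt 2 * Real.sqrt 2 = 2 := Real.mul_self_sqrt (by norm_num)
  simp only [s2, ← Complex.ofReal_mul, this]; norm_num

lemma s2_ne : s2 ≠ 0 := by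
  have h : (0:ℝ) < Real.sqrt 2 := Real.sqrt_pos.mpr (by norm_num)
  simp [s2, ne_of_gt h]

/-- coordinate functionals as continuous linear maps -/
def xL (j : Fin n) : Phase n →L[ℝ] ℂ :=
  Complex.ofRealCLM.comp ((ContinuousLinearMap.proj j).comp
    (ContinuousLinearMap.fst ℝ (Fin n → ℝ) (Fin n → ℝ)))

def pL (j : Fin n) : Phase n →L[ℝ] ℂ :=
  Complex.ofRealCLM.comp ((ContinuousLinearMap.proj j).comp
    (ContinuousLinearMap.snd ℝ (Fin n → ℝ) (Fin n → ℝ)))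

def zfL (j : Fin n) : Phase n →L[ℝ] ℂ :=
  ((Real.sqrt 2)⁻¹ : ℝ) • (xL j + Complex.I • pL j)

def zbL (j : Fin n) : Phase n →L[ℝ] ℂ :=
  ((Real.sqrt 2)⁻¹ : ℝ) • (xL j - Complex.I • pL j)

lemma zfL_apply (j : Fin n) (v : Phase n) :
    zfL j v = ((v.1 j : ℂ) + Complex.I * (v.2 j : ℂ)) * s2⁻¹ := by
  simp [zfL, xL, pL, s2, Complex.real_smul, smul_eq_mul]
  ring

lemma zbL_apply (j : Fin n) (v : Phase n) :
    zbL j v = ((v.1 j : ℂ) - Complex.I * (v.2 j : ℂ)) * s2⁻¹ := by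
  simp [zbL, xL, pL, s2, Complex.real_smul, smul_eq_mul]
  ring

lemma zf_eq (j : Fin n) : zf j = ⇑(zfL j) := by
  funext w
  rw [zfL_apply]
  simp [zf, s2, div_eq_mul_inv]

lemma zb_eq (j : Fin n) : zbf j = ⇑(zbL j) := by
  funext w
  rw [zbL_apply]
  simp [zbf, s2, div_eq_mul_inv]

lemma hasFDerivAt_zf (j : Fin n) (w : Phase n) : HasFDerivAt (zf j) (zfL j) w := by
  rw [zf_eq]; exact (zfL j).hasFDerivAt

lemma hasFDerivAt_zb (j : Fin n) (w : Phase n) : HasFDerivAt (zbf j) (zbL j) w := by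
  rw [zb_eq]; exact (zbL j).hasFDerivAt

/-- direction vectors -/
def xdir (j : Fin n) : Phase n := (Pi.single j (1 : ℝ), (0 : Fin n → ℝ))
def pdir (j : Fin n) : Phase n := ((0 : Fin n → ℝ), Pi.single j (1 : ℝ))

lemma zfL_xdir (j k : Fin n) : zfL j (xdir k) = if j = k then s2⁻¹ else 0 := by
  rw [zfL_apply]
  simp [xdir, Pi.single_apply, eq_comm]
  split <;> simp

lemma zfL_pdir (j k : Fin n) : zfL j (pdir k) = if j = k then Complex.I * s2⁻¹ else 0 := by
  rw [zfL_apply]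
  simp [pdir, Pi.single_apply, eq_comm]
  split <;> simp [mul_assoc]

lemma zbL_xdir (j k : Fin n) : zbL j (xdir k) = if j = k then s2⁻¹ else 0 := by
  rw [zbL_apply]
  simp [xdir, Pi.single_apply, eq_comm]
  split <;> simp

lemma zbL_pdir (j k : Fin n) : zbL j (pdir k) = if j = k then -(Complex.I * s2⁻¹) else 0 := by
  rw [zbL_apply]
  simp [pdir, Pi.single_apply, eq_comm]
  split <;> simp [mul_assoc]

/-- The Hamiltonian `F₁` as a function. -/
def G (l : Fin n → ℤ) : Phase n → ℂ := fun w => ∑ j : Fin n, (l j : ℂ) * Iact j w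

lemma hasFDerivAt_G (l : Fin n → ℤ) (w : Phase n) :
    HasFDerivAt (G l)
      (∑ j : Fin n, (l j : ℂ) • (zf j w • zbL j + zbf j w • zfL j)) w := by
  apply HasFDerivAt.fun_sum
  intro j _
  exact ((hasFDerivAt_zf j w).mul (hasFDerivAt_zb j w)).const_mul _

lemma fderiv_G_xdir (l : Fin n → ℤ) (w : Phase n) (k : Fin n) :
    fderiv ℝ (G l) w (xdir k) = (l k : ℂ) * ((zf k w + zbf k w) * s2⁻¹) := by
  rw [(hasFDerivAt_G l w).fderiv]
  rw [ContinuousLinearMap.sum_apply]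
  rw [Finset.sum_eq_single k]
  · simp [zfL_xdir, zbL_xdir, smul_eq_mul]
    ring
  · intro j _ hj
    simp [zfL_xdir, zbL_xdir, hj, smul_eq_mul]
  · simp

lemma fderiv_G_pdir (l : Fin n → ℤ) (w : Phase n) (k : Fin n) :
    fderiv ℝ (G l) w (pdir k) = (l k : ℂ) * ((zbf k w - zf k w) * (Complex.I * s2⁻¹)) := by
  rw [(hasFDerivAt_G l w).fderiv]
  rw [ContinuousLinearMap.sum_apply]
  rw [Finset.sum_eq_single k]
  · simp [zfL_pdir, zbL_pdir, smul_eq_mul]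
    ring
  · intro j _ hj
    simp [zfL_pdir, zbL_pdir, hj, smul_eq_mul]
  · simp

/-- Eigenfunction predicate for the derivation `pb (G l) ·`. -/
def Eig (l : Fin n → ℤ) (c : ℂ) (g : Phase n → ℂ) : Prop :=
  Differentiable ℝ g ∧ pb (G l) g = fun w => c * g w

lemma pb_apply (F g : Phase n → ℂ) (w : Phase n) :
    pb F g w = ∑ j : Fin n,
      (fderiv ℝ F w (pdir j) * fderiv ℝ g w (xdir j) -
        fderiv ℝ F w (xdir j) * fderiv ℝ g w (pdir j)) := rfl

lemma eig_zf (l : Fin n → ℤ) (k : Fin n) :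
    Eig l (-Complex.I * (l k : ℂ)) (zf k) := by
  constructor
  · intro w; exact (hasFDerivAt_zf k w).differentiableAt
  funext w
  rw [pb_apply]
  have hzd : fderiv ℝ (zf k) w = zfL k := (hasFDerivAt_zf k w).fderiv
  rw [Finset.sum_eq_single k]
  · rw [hzd, zfL_xdir, zfL_pdir, fderiv_G_xdir, fderiv_G_pdir]
    simp only [if_pos rfl, if_true]
    have h2 : s2⁻¹ * s2⁻¹ = 2⁻¹ := by
      rw [← mul_inv]; rw [s2_sq]
    linear_combination (-2 * Complex.I * ((l k : ℤ) : ℂ) * zf k w) * h2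
  · intro j _ hj
    rw [hzd, zfL_xdir, zfL_pdir, if_neg hj.symm, if_neg hj.symm]
    ring
  · simp

lemma eig_zb (l : Fin n → ℤ) (k : Fin n) :
    Eig l (Complex.I * (l k : ℂ)) (zbf k) := by
  constructor
  · intro w; exact (hasFDerivAt_zb k w).differentiableAt
  funext w
  rw [pb_apply]
  have hzd : fderiv ℝ (zbf k) w = zbL k := (hasFDerivAt_zb k w).fderiv
  rw [Finset.sum_eq_single k]
  · rw [hzd, zbL_xdir, zbL_pdir, fderiv_G_xdir, fderiv_G_pdir]
    simp only [if_pos rfl, if_true]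
    have h2 : s2⁻¹ * s2⁻¹ = 2⁻¹ := by
      rw [← mul_inv]; rw [s2_sq]
    linear_combination (2 * Complex.I * ((l k : ℤ) : ℂ) * zbf k w) * h2
  · intro j _ hj
    rw [hzd, zbL_xdir, zbL_pdir, if_neg hj.symm, if_neg hj.symm]
    ring
  · simp

lemma Eig.mul {l : Fin n → ℤ} {c d : ℂ} {g h : Phase n → ℂ}
    (hg : Eig l c g) (hh : Eig l d h) :
    Eig l (c + d) (fun w => g w * h w) := by
  obtain ⟨hgd, hge⟩ := hg
  obtain ⟨hhd, hhe⟩ := hh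
  refine ⟨hgd.mul hhd, ?_⟩
  funext w
  rw [pb_apply]
  have hmul : fderiv ℝ (fun w => g w * h w) w
      = g w • fderiv ℝ h w + h w • fderiv ℝ g w := fderiv_mul (hgd w) (hhd w)
  simp only [hmul, ContinuousLinearMap.add_apply, ContinuousLinearMap.smul_apply,
    smul_eq_mul]
  have h1 : ∑ j : Fin n,
      (fderiv ℝ (G l) w (pdir j) *
          (g w * fderiv ℝ h w (xdir j) + h w * fderiv ℝ g w (xdir j)) -
        fderiv ℝ (G l) w (xdir j) *
          (g w * fderiv ℝ h w (pdir j) + h w * fderiv ℝ g w (pdir j)))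
      = g w * pb (G l) h w + h w * pb (G l) g w := by
    rw [pb_apply, pb_apply, Finset.mul_sum, Finset.mul_sum, ← Finset.sum_add_distrib]
    apply Finset.sum_congr rfl
    intro j _
    ring
  rw [h1, hge, hhe]
  ring

lemma Eig.pow {l : Fin n → ℤ} {c : ℂ} {g : Phase n → ℂ} (hg : Eig l c g) (k : ℕ) :
    Eig l ((k : ℂ) * c) (fun w => g w ^ k) := by
  induction k with
  | zero =>
    refine ⟨by simpa using differentiable_const (1:ℂ), ?_⟩
    funext w
    rw [pb_apply]
    have : fderiv ℝ (fun w : Phase n => g w ^ 0) w = 0 := by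
      simp only [pow_zero]
      exact fderiv_const_apply 1
    simp [this]
  | succ k ih =>
    have := ih.mul hg
    have heq : (fun w => g w ^ k * g w) = fun w => g w ^ (k + 1) := by
      funext w; rw [pow_succ]
    rw [heq] at this
    have hc : ((k + 1 : ℕ) : ℂ) * c = (k : ℂ) * c + c := by push_cast; ring
    rw [hc]
    exact this

lemma Eig.finprod {l : Fin n → ℤ} {c : Fin n → ℂ} {g : Fin n → Phase n → ℂ}
    (hg : ∀ j, Eig l (c j) (g j)) (s : Finset (Fin n)) :
    Eig l (∑ j ∈ s, c j) (fun w => ∏ j ∈ s, g j w) := by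
  induction s using Finset.induction_on with
  | empty =>
    refine ⟨by simpa using differentiable_const (1:ℂ), ?_⟩
    funext w
    rw [pb_apply]
    have : fderiv ℝ (fun w : Phase n => ∏ j ∈ (∅ : Finset (Fin n)), g j w) w = 0 := by
      simp only [Finset.prod_empty]
      exact fderiv_const_apply 1
    simp [this]
  | @insert a s' hj ih =>
    have h := (hg a).mul ih
    have heq : (fun w => g a w * ∏ j ∈ s', g j w) = fun w => ∏ j ∈ insert a s', g j w := by
      funext w; rw [Finset.prod_insert hj]
    rw [heq] at h
    rwa [Finset.sum_insert hj]

lemma eig_Pab (l : Fin n → ℤ) (a b : Fin n → ℕ) :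
    Eig l (-Complex.I * ∑ j : Fin n, (l j : ℂ) * ((a j : ℂ) - (b j : ℂ))) (Pab a b) := by
  have h : ∀ j : Fin n, Eig l
      ((a j : ℂ) * (-Complex.I * (l j : ℂ)) + (b j : ℂ) * (Complex.I * (l j : ℂ)))
      (fun w => zf j w ^ a j * zbf j w ^ b j) :=
    fun j => ((eig_zf l j).pow (a j)).mul ((eig_zb l j).pow (b j))
  have := Eig.finprod h Finset.univ
  have hPab : (fun w => ∏ j : Fin n, zf j w ^ a j * zbf j w ^ b j) = Pab a b := rfl
  rw [hPab] at this
  convert this using 2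
  rw [Finset.mul_sum]
  apply Finset.sum_congr rfl
  intro j _
  ring

lemma pb_finsum {ι : Type*} (F : Phase n → ℂ) (s : Finset ι) (g : ι → Phase n → ℂ)
    (hg : ∀ m ∈ s, Differentiable ℝ (g m)) :
    pb F (fun w => ∑ m ∈ s, g m w) = fun w => ∑ m ∈ s, pb F (g m) w := by
  funext w
  rw [pb_apply]
  have hd : fderiv ℝ (fun w => ∑ m ∈ s, g m w) w = ∑ m ∈ s, fderiv ℝ (g m) w :=
    fderiv_fun_sum (fun m hm => (hg m hm) w)
  simp only [hd, ContinuousLinearMap.sum_apply, Finset.mul_sum, ← Finset.sum_sub_distrib]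
  rw [Finset.sum_comm]
  apply Finset.sum_congr rfl
  intro m _
  rw [pb_apply]

lemma pb_const_mul (F : Phase n → ℂ) (c : ℂ) (g : Phase n → ℂ) (hg : Differentiable ℝ g) :
    pb F (fun w => c * g w) = fun w => c * pb F g w := by
  funext w
  rw [pb_apply, pb_apply, Finset.mul_sum]
  apply Finset.sum_congr rfl
  intro j _
  rw [fderiv_const_mul (hg w) c]
  simp only [ContinuousLinearMap.smul_apply, smul_eq_mul]
  ring

/-! ### Algebraic part -/

/-- The point `(x, p)` embedded into `ℂ^{2n}`. -/
def Rpt (w : Phase n) : Fin n ⊕ Fin n → ℂ :=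
  Sum.elim (fun j => (w.1 j : ℂ)) (fun j => (w.2 j : ℂ))

/-- The point `(z, z̄)` in `ℂ^{2n}`. -/
def Zpt (w : Phase n) : Fin n ⊕ Fin n → ℂ :=
  Sum.elim (fun j => zf j w) (fun j => zbf j w)

/-- Substitution expressing `z, z̄` in terms of `x, p`. -/
def Tz : Fin n ⊕ Fin n → MvPolynomial (Fin n ⊕ Fin n) ℂ :=
  Sum.elim
    (fun j => C s2⁻¹ * (X (Sum.inl j) + C Complex.I * X (Sum.inr j)))
    (fun j => C s2⁻¹ * (X (Sum.inl j) - C Complex.I * X (Sum.inr j)))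

/-- Substitution expressing `x, p` in terms of `z, z̄`. -/
def Sx : Fin n ⊕ Fin n → MvPolynomial (Fin n ⊕ Fin n) ℂ :=
  Sum.elim
    (fun j => C s2⁻¹ * (X (Sum.inl j) + X (Sum.inr j)))
    (fun j => C s2⁻¹ * (C (-Complex.I) * (X (Sum.inl j) - X (Sum.inr j))))

lemma hC : (C s2⁻¹ : MvPolynomial (Fin n ⊕ Fin n) ℂ) * C s2⁻¹ = C 2⁻¹ := by
  rw [← C_mul, ← mul_inv, s2_sq]

lemma hH2 : (C (2⁻¹ : ℂ) : MvPolynomial (Fin n ⊕ Fin n) ℂ) + C (2⁻¹ : ℂ) = 1 := by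
  rw [← C_add]
  norm_num

lemma hI : (C Complex.I : MvPolynomial (Fin n ⊕ Fin n) ℂ) * C (-Complex.I) = 1 := by
  rw [← C_mul]
  simp [Complex.mul_conj]

lemma aeval_Sx_Tz (k : Fin n ⊕ Fin n) :
    MvPolynomial.aeval Sx (Tz k : MvPolynomial (Fin n ⊕ Fin n) ℂ) = X k := by
  cases k with
  | inl j =>
    simp only [Tz, Sum.elim_inl, map_mul, map_add, map_sub, aeval_X, aeval_C, Sx,
      Sum.elim_inr, MvPolynomial.algebraMap_eq]
    set u := (X (Sum.inl j) : MvPolynomial (Fin n ⊕ Fin n) ℂ)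
    set v := (X (Sum.inr j) : MvPolynomial (Fin n ⊕ Fin n) ℂ)
    have h1 := hC (n := n)
    have h2 := hH2 (n := n)
    have h3 := hI (n := n)
    linear_combination (u + v) * h1 + (u - v) * (C Complex.I * C (-Complex.I)) * h1 +
      (u - v) * C (2⁻¹ : ℂ) * h3 + u * h2
  | inr j =>
    simp only [Tz, Sum.elim_inr, map_mul, map_add, map_sub, aeval_X, aeval_C, Sx,
      Sum.elim_inl, MvPolynomial.algebraMap_eq]
    set u := (X (Sum.inl j) : MvPolynomial (Fin n ⊕ Fin n) ℂ)
    set v := (X (Sum.inr j) : MvPolynomial (Fin n ⊕ Fin n) ℂ)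
    have h1 := hC (n := n)
    have h2 := hH2 (n := n)
    have h3 := hI (n := n)
    linear_combination (u + v) * h1 - (u - v) * (C Complex.I * C (-Complex.I)) * h1 -
      (u - v) * C (2⁻¹ : ℂ) * h3 + v * h2

lemma aeval_Sx_Tz_id (r : MvPolynomial (Fin n ⊕ Fin n) ℂ) :
    MvPolynomial.aeval Sx (MvPolynomial.aeval Tz r) = r := by
  rw [comp_aeval_apply]
  simp only [aeval_Sx_Tz]
  exact aeval_X_left_apply r

lemma eval_Tz (w : Phase n) (k : Fin n ⊕ Fin n) :
    MvPolynomial.eval (Rpt w) (Tz k) = Zpt w k := by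
  cases k with
  | inl j =>
    simp only [Tz, Sum.elim_inl, Sum.elim_inr, map_mul, map_add, eval_X, eval_C,
      Rpt, Zpt, zf, s2]
    rw [div_eq_mul_inv, mul_comm]
  | inr j =>
    simp only [Tz, Sum.elim_inl, Sum.elim_inr, map_mul, map_sub, eval_X, eval_C,
      Rpt, Zpt, zbf, s2]
    rw [div_eq_mul_inv, mul_comm]

lemma eval_Sx (w : Phase n) (k : Fin n ⊕ Fin n) :
    MvPolynomial.eval (Zpt w) (Sx k) = Rpt w k := by
  have h2 : ((Real.sqrt 2 : ℝ) : ℂ) * ((Real.sqrt 2 : ℝ) : ℂ) = 2 := s2_sq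
  have hne : ((Real.sqrt 2 : ℝ) : ℂ) ≠ 0 := s2_ne
  have hII : Complex.I * Complex.I = -1 := Complex.I_mul_I
  cases k with
  | inl j =>
    simp only [Sx, Sum.elim_inl, Sum.elim_inr, map_mul, map_add, eval_X, eval_C,
      Rpt, Zpt, zf, zbf, s2]
    field_simp
    linear_combination (-(w.1 j : ℂ)) * h2
  | inr j =>
    simp only [Sx, Sum.elim_inl, Sum.elim_inr, map_mul, map_sub, eval_X, eval_C,
      Rpt, Zpt, zf, zbf, s2]
    field_simp
    linear_combination (-2 * (w.2 j : ℂ)) * hII + (-(w.2 j : ℂ)) * h2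

lemma eval_aeval (pt : Fin n ⊕ Fin n → ℂ) (F : Fin n ⊕ Fin n → MvPolynomial (Fin n ⊕ Fin n) ℂ)
    (r : MvPolynomial (Fin n ⊕ Fin n) ℂ) :
    MvPolynomial.eval pt (MvPolynomial.aeval F r)
      = MvPolynomial.eval (fun k => MvPolynomial.eval pt (F k)) r := by
  have h1 : MvPolynomial.eval pt (MvPolynomial.aeval F r)
      = MvPolynomial.aeval pt (MvPolynomial.aeval F r) := by
    simp [MvPolynomial.aeval_def, MvPolynomial.eval₂_id]
  rw [h1, comp_aeval_apply]
  simp only [MvPolynomial.aeval_def, Algebra.algebraMap_self, MvPolynomial.eval₂_id]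

/-- cast of a real evaluation -/
lemma eval_map_real (w : Phase n) (Q : MvPolynomial (Fin n ⊕ Fin n) ℝ) :
    MvPolynomial.eval (Rpt w) (MvPolynomial.map (algebraMap ℝ ℂ) Q)
      = ((MvPolynomial.eval (Sum.elim w.1 w.2) Q : ℝ) : ℂ) := by
  rw [eval_map]
  have h := MvPolynomial.eval₂_comp_left (algebraMap ℝ ℂ) (RingHom.id ℝ)
    (Sum.elim w.1 w.2) Q
  rw [RingHom.comp_id, MvPolynomial.eval₂_id] at h
  have hpt : Rpt w = ⇑(algebraMap ℝ ℂ) ∘ Sum.elim w.1 w.2 := by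
    funext k; cases k <;> rfl
  rw [hpt, ← h]
  rfl

/-- A complex polynomial vanishing at all real points is zero. -/
lemma eval_real_zero (r : MvPolynomial (Fin n ⊕ Fin n) ℂ)
    (h : ∀ w : Phase n, MvPolynomial.eval (Rpt w) r = 0) : r = 0 := by
  classical
  set A : MvPolynomial (Fin n ⊕ Fin n) ℝ :=
    ∑ m ∈ r.support, monomial m (r.coeff m).re with hA
  set B : MvPolynomial (Fin n ⊕ Fin n) ℝ :=
    ∑ m ∈ r.support, monomial m (r.coeff m).im with hB
  have key : MvPolynomial.map (algebraMap ℝ ℂ) A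
      + C Complex.I * MvPolynomial.map (algebraMap ℝ ℂ) B = r := by
    apply MvPolynomial.ext
    intro m
    rw [coeff_add, coeff_C_mul, coeff_map, coeff_map, hA, hB]
    rw [MvPolynomial.coeff_sum, MvPolynomial.coeff_sum]
    simp only [coeff_monomial]
    rw [Finset.sum_ite_eq' r.support m, Finset.sum_ite_eq' r.support m]
    by_cases hm : m ∈ r.support
    · rw [if_pos hm, if_pos hm]
      simp [Complex.ext_iff]
    · rw [if_neg hm, if_neg hm]
      have : r.coeff m = 0 := by rwa [MvPolynomial.notMem_support_iff] at hm
      simp [this]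
  have hAB : ∀ v : Fin n ⊕ Fin n → ℝ,
      MvPolynomial.eval v A = 0 ∧ MvPolynomial.eval v B = 0 := by
    intro v
    set w : Phase n := (v ∘ Sum.inl, v ∘ Sum.inr) with hw
    have hv : Sum.elim w.1 w.2 = v := by funext k; cases k <;> rfl
    have h0 := h w
    rw [← key] at h0
    rw [map_add, eval_map_real, map_mul, eval_C, eval_map_real, hv] at h0
    have hre := congrArg Complex.re h0
    have him := congrArg Complex.im h0
    simp at hre him
    exact ⟨hre, him⟩
  have hA0 : A = 0 := MvPolynomial.funext fun v => by rw [(hAB v).1]; simp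
  have hB0 : B = 0 := MvPolynomial.funext fun v => by rw [(hAB v).2]; simp
  rw [← key, hA0, hB0]
  simp

/-- first half of a multi-index -/
def am (m : (Fin n ⊕ Fin n) →₀ ℕ) : Fin n → ℕ := fun j => m (Sum.inl j)

/-- second half of a multi-index -/
def bm (m : (Fin n ⊕ Fin n) →₀ ℕ) : Fin n → ℕ := fun j => m (Sum.inr j)

/-- eigenvalue of a monomial -/
def μm (l : Fin n → ℤ) (m : (Fin n ⊕ Fin n) →₀ ℕ) : ℂ :=
  -Complex.I * ∑ j : Fin n, (l j : ℂ) * ((am m j : ℂ) - (bm m j : ℂ))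

/-- The product over a sum type collapses to `Pab`. -/
lemma prod_Zpt (w : Phase n) (m : (Fin n ⊕ Fin n) →₀ ℕ) :
    (∏ k : Fin n ⊕ Fin n, Zpt w k ^ m k) = Pab (am m) (bm m) w := by
  rw [Fintype.prod_sum_type, Pab, ← Finset.prod_mul_distrib]
  rfl

lemma main (n : ℕ) (l : Fin n → ℤ) (hl : ∀ j, l j ≠ 0)
    (F1 : Phase n → ℂ) (hF1 : F1 = fun w => ∑ j : Fin n, (l j : ℂ) * Iact j w)
    (f : Phase n → ℝ)
    (hpoly : ∃ Q : MvPolynomial (Fin n ⊕ Fin n) ℝ,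
      f = fun w => MvPolynomial.eval (Sum.elim w.1 w.2) Q)
    (hinv : pb F1 (fun w => ((f w : ℝ) : ℂ)) = 0) :
    f ∈ Submodule.span ℝ {g : Phase n → ℝ |
      ∃ a b : Fin n → ℕ, (∑ j : Fin n, l j * ((a j : ℤ) - (b j : ℤ))) = 0 ∧
        ((g = fun w => (Pab a b w).re) ∨ (g = fun w => (Pab a b w).im))} := by
  classical
  obtain ⟨Q, hfQ⟩ := hpoly
  set q : MvPolynomial (Fin n ⊕ Fin n) ℂ :=
    MvPolynomial.aeval Sx (MvPolynomial.map (algebraMap ℝ ℂ) Q) with hq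
  set c : ((Fin n ⊕ Fin n) →₀ ℕ) → ℂ := fun m => MvPolynomial.coeff m q with hc
  -- expansion of the complexification of f in resonant monomials
  have hfc : ∀ w : Phase n,
      ((f w : ℝ) : ℂ) = ∑ m ∈ q.support, c m * Pab (am m) (bm m) w := by
    intro w
    have h1 : ((f w : ℝ) : ℂ)
        = MvPolynomial.eval (Rpt w) (MvPolynomial.map (algebraMap ℝ ℂ) Q) := by
      rw [hfQ]; exact (eval_map_real w Q).symm
    have h2 : MvPolynomial.eval (Zpt w) q
        = MvPolynomial.eval (Rpt w) (MvPolynomial.map (algebraMap ℝ ℂ) Q) := by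
      rw [hq, eval_aeval]
      have hpt : (fun k => MvPolynomial.eval (Zpt w) (Sx k)) = Rpt w := funext (eval_Sx w)
      rw [hpt]
    rw [h1, ← h2, eval_eq']
    apply Finset.sum_congr rfl
    intro m _
    rw [prod_Zpt]
  have heig : ∀ m, Eig l (μm l m) (Pab (am m) (bm m)) := fun m => eig_Pab l (am m) (bm m)
  have hFG : F1 = G l := by rw [hF1]; rfl
  have hfun : (fun w => ((f w : ℝ) : ℂ))
      = fun w => ∑ m ∈ q.support, c m * Pab (am m) (bm m) w := funext hfc
  -- the Poisson bracket of the expansion vanishes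
  have hpb : (fun w => ∑ m ∈ q.support, c m * (μm l m * Pab (am m) (bm m) w))
      = (0 : Phase n → ℂ) := by
    have hterm : ∀ m ∈ q.support,
        pb (G l) (fun w => c m * Pab (am m) (bm m) w)
          = fun w => c m * (μm l m * Pab (am m) (bm m) w) := by
      intro m _
      funext w
      have h1 := congrFun (pb_const_mul (G l) (c m) (Pab (am m) (bm m)) (heig m).1) w
      have h2 := congrFun (heig m).2 w
      rw [h1, h2]
    calc (fun w => ∑ m ∈ q.support, c m * (μm l m * Pab (am m) (bm m) w))
        = fun w => ∑ m ∈ q.support,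
            pb (G l) (fun w => c m * Pab (am m) (bm m) w) w := by
          funext w
          exact Finset.sum_congr rfl fun m hm => (congrFun (hterm m hm) w).symm
      _ = pb (G l) (fun w => ∑ m ∈ q.support, c m * Pab (am m) (bm m) w) :=
          (pb_finsum (G l) q.support _
            (fun m _ => (heig m).1.const_mul (c m))).symm
      _ = 0 := by rw [← hfun, ← hFG]; exact hinv
  -- transfer the vanishing to a polynomial statement
  set r : MvPolynomial (Fin n ⊕ Fin n) ℂ :=
    ∑ m ∈ q.support, MvPolynomial.monomial m (c m * μm l m) with hr
  have hevalr : ∀ w : Phase n, MvPolynomial.eval (Zpt w) r = 0 := by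
    intro w
    rw [hr, map_sum]
    have hmono : ∀ m ∈ q.support,
        MvPolynomial.eval (Zpt w) (MvPolynomial.monomial m (c m * μm l m))
          = c m * (μm l m * Pab (am m) (bm m) w) := by
      intro m _
      rw [eval_monomial, Finsupp.prod_pow, prod_Zpt]
      ring
    rw [Finset.sum_congr rfl hmono]
    exact congrFun hpb w
  have hr0 : r = 0 := by
    have h1 : ∀ w : Phase n, MvPolynomial.eval (Rpt w) (MvPolynomial.aeval Tz r) = 0 := by
      intro w
      rw [eval_aeval]
      have hzz : (fun k => MvPolynomial.eval (Rpt w) (Tz k)) = Zpt w := funext (eval_Tz w)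
      rw [hzz]
      exact hevalr w
    have h2 := eval_real_zero (MvPolynomial.aeval Tz r) h1
    have h3 := aeval_Sx_Tz_id (n := n) r
    rw [h2] at h3
    rw [← h3]
    simp
  have hres : ∀ m ∈ q.support, μm l m = 0 := by
    intro m hm
    have hcoeff : MvPolynomial.coeff m r = c m * μm l m := by
      rw [hr, MvPolynomial.coeff_sum]
      simp only [MvPolynomial.coeff_monomial]
      rw [Finset.sum_ite_eq' q.support m]
      rw [if_pos hm]
    rw [hr0] at hcoeff
    simp only [MvPolynomial.coeff_zero] at hcoeff
    have hcm : c m ≠ 0 := by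
      rw [hc]
      exact MvPolynomial.mem_support_iff.mp hm
    rcases mul_eq_zero.mp hcoeff.symm with h | h
    · exact absurd h hcm
    · exact h
  have hresZ : ∀ m ∈ q.support,
      (∑ j : Fin n, l j * ((am m j : ℤ) - (bm m j : ℤ))) = 0 := by
    intro m hm
    have h := hres m hm
    rw [μm, mul_eq_zero] at h
    have hS : (∑ j : Fin n, (l j : ℂ) * ((am m j : ℂ) - (bm m j : ℂ))) = 0 := by
      rcases h with h' | h'
      · exact absurd (neg_eq_zero.mp h') Complex.I_ne_zero
      · exact h'
    have hcast : ((∑ j : Fin n, l j * ((am m j : ℤ) - (bm m j : ℤ)) : ℤ) : ℂ) = 0 := by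
      push_cast
      exact_mod_cast hS
    exact_mod_cast hcast
  -- final assembly
  have hfsum : f = ∑ m ∈ q.support,
      ((c m).re • (fun w => (Pab (am m) (bm m) w).re)
        + (-(c m).im) • (fun w => (Pab (am m) (bm m) w).im)) := by
    funext w
    have h1 : f w = (((f w : ℝ) : ℂ)).re := (Complex.ofReal_re _).symm
    rw [h1, hfc w, Complex.re_sum, Finset.sum_apply]
    apply Finset.sum_congr rfl
    intro m _
    simp only [Pi.add_apply, Pi.smul_apply, smul_eq_mul, Complex.mul_re]
    ring
  rw [hfsum]
  apply Submodule.sum_mem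
  intro m hm
  apply Submodule.add_mem
  · exact Submodule.smul_mem _ _
      (Submodule.subset_span ⟨am m, bm m, hresZ m hm, Or.inl rfl⟩)
  · exact Submodule.smul_mem _ _
      (Submodule.subset_span ⟨am m, bm m, hresZ m hm, Or.inr rfl⟩)

end Stmt1Aux

/-- every real polynomial in `(x,p)` which is in involution with
`F₁ = ∑_j l_j I_j` is a real linear combination of the functions `Re P_{a,b}`, `Im P_{a,b}`
with `∑_j l_j (a_j − b_j) = 0`. -/
theorem statement1 (n : ℕ) (l : Fin n → ℤ) (hl : ∀ j, l j ≠ 0)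
    (F1 : Phase n → ℂ) (hF1 : F1 = fun w => ∑ j : Fin n, (l j : ℂ) * Iact j w)
    (f : Phase n → ℝ)
    (hpoly : ∃ Q : MvPolynomial (Fin n ⊕ Fin n) ℝ,
      f = fun w => MvPolynomial.eval (Sum.elim w.1 w.2) Q)
    (hinv : pb F1 (fun w => ((f w : ℝ) : ℂ)) = 0) :
    f ∈ Submodule.span ℝ {g : Phase n → ℝ |
      ∃ a b : Fin n → ℕ, (∑ j : Fin n, l j * ((a j : ℤ) - (b j : ℤ))) = 0 ∧
        ((g = fun w => (Pab a b w).re) ∨ (g = fun w => (Pab a b w).im))} :=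
  Stmt1Aux.main n l hl F1 hF1 f hpoly hinv

end
end

section
/- Let n ≥ 2 and l ∈ ℤ^n with l_j ≥ 1 for every j, and set F_1 = Σ_j l_j I_j and R_{1j} = Im(z_1^{l_j} z̄_j^{l_1}) for j = 2,…,n. Then {F_1, I_j} = 0 and {F_1, R_{1j}} = 0 for every j = 2,…,n, and the 2n−1 functions (F_1, I_2, …, I_n, R_{12}, …, R_{1n}) are functionally independent; hence they form an integrable set whose single central element is the Hamiltonian F_1 of the fully resonant linear oscillators. -/
noncomputable section

open Complex

/-- x_j evaluation as CLM -/
def ex {n : ℕ} (j : Fin n) : Phase n →L[ℝ] ℝ :=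
  (ContinuousLinearMap.proj j).comp (ContinuousLinearMap.fst ℝ _ _)
def ep {n : ℕ} (j : Fin n) : Phase n →L[ℝ] ℝ :=
  (ContinuousLinearMap.proj j).comp (ContinuousLinearMap.snd ℝ _ _)

@[simp] lemma ex_apply {n : ℕ} (j : Fin n) (v : Phase n) : ex j v = v.1 j := rfl
@[simp] lemma ep_apply {n : ℕ} (j : Fin n) (v : Phase n) : ep j v = v.2 j := rfl

/-- zf as a continuous linear map -/
def zfL {n : ℕ} (j : Fin n) : Phase n →L[ℝ] ℂ :=
  LinearMap.toContinuousLinearMap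
  { toFun := zf j
    map_add' := by intro a b; simp [zf]; ring
    map_smul' := by intro c a; simp [zf]; ring }

@[simp] lemma zfL_apply {n : ℕ} (j : Fin n) (w : Phase n) : zfL j w = zf j w := rfl

lemma pow_hasFDerivAt {E : Type*} [NormedAddCommGroup E] [NormedSpace ℝ E]
    {f : E → ℂ} {f' : E →L[ℝ] ℂ} {x : E} (hf : HasFDerivAt f f' x) (m : ℕ) :
    HasFDerivAt (fun w => f w ^ m) (((m : ℂ) * f x ^ (m - 1)) • f') x := by
  induction m with
  | zero =>
      have e : (((0 : ℕ) : ℂ) * f x ^ (0 - 1)) • f' = (0 : E →L[ℝ] ℂ) := by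
        ext v; simp
      simp only [pow_zero]
      exact (hasFDerivAt_const (1 : ℂ) x).congr_fderiv e.symm
  | succ k ih =>
      have h := ih.mul hf
      have hfun : (fun w => f w ^ (k + 1)) = (fun w => f w ^ k) * f := by
        funext w; simp [pow_succ]
      rw [hfun]
      refine h.congr_fderiv ?_
      ext v
      simp [pow_succ, smul_smul]
      cases k with
      | zero => simp
      | succ k2 => simp [pow_succ]; ring

def zbL {n : ℕ} (j : Fin n) : Phase n →L[ℝ] ℂ :=
  LinearMap.toContinuousLinearMap
  { toFun := zbf j
    map_add' := by intro a b; simp [zbf]; ring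
    map_smul' := by intro c a; simp [zbf]; ring }

@[simp] lemma zbL_apply {n : ℕ} (j : Fin n) (w : Phase n) : zbL j w = zbf j w := rfl

lemma hasFDerivAt_IR {n : ℕ} (j : Fin n) (w : Phase n) :
    HasFDerivAt (IR j) (w.1 j • ex j + w.2 j • ep j) w := by
  have hx : HasFDerivAt (fun w : Phase n => ex j w) (ex j) w := (ex j).hasFDerivAt
  have hp : HasFDerivAt (fun w : Phase n => ep j w) (ep j) w := (ep j).hasFDerivAt
  have h := ((hx.mul hx).add (hp.mul hp)).const_mul (2⁻¹ : ℝ)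
  have : IR j = fun w : Phase n => (2⁻¹ : ℝ) * (ex j w * ex j w + ep j w * ep j w) := by
    funext w; simp [IR]; ring
  rw [this]
  refine h.congr_fderiv ?_
  ext v <;> simp <;> ring

lemma fderiv_IR_apply {n : ℕ} (j : Fin n) (w v : Phase n) :
    fderiv ℝ (IR j) w v = w.1 j * v.1 j + w.2 j * v.2 j := by
  rw [(hasFDerivAt_IR j w).fderiv]; simp

lemma hasFDerivAt_F1 {n : ℕ} (l : Fin n → ℤ) (w : Phase n) :
    HasFDerivAt (fun w => ∑ j : Fin n, (l j : ℝ) * IR j w)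
      (∑ j : Fin n, (l j : ℝ) • (w.1 j • ex j + w.2 j • ep j)) w := by
  exact HasFDerivAt.fun_sum fun j _ => (hasFDerivAt_IR j w).const_mul _

lemma fderiv_F1_apply {n : ℕ} (l : Fin n → ℤ) (w v : Phase n) :
    fderiv ℝ (fun w => ∑ j : Fin n, (l j : ℝ) * IR j w) w v
      = ∑ j : Fin n, (l j : ℝ) * (w.1 j * v.1 j + w.2 j * v.2 j) := by
  rw [(hasFDerivAt_F1 l w).fderiv]
  simp [mul_add]

lemma hasFDerivAt_g {n : ℕ} (i0 j : Fin n) (a b : ℕ) (w : Phase n) :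
    HasFDerivAt (fun w => zf i0 w ^ a * zbf j w ^ b)
      ((zf i0 w ^ a • (((b : ℂ) * zbf j w ^ (b - 1)) • zbL j)) +
       (zbf j w ^ b • (((a : ℂ) * zf i0 w ^ (a - 1)) • zfL i0))) w := by
  have hz : HasFDerivAt (fun w : Phase n => zf i0 w) (zfL i0) w := (zfL i0).hasFDerivAt
  have hzb : HasFDerivAt (fun w : Phase n => zbf j w) (zbL j) w := (zbL j).hasFDerivAt
  exact (pow_hasFDerivAt hz a).mul (pow_hasFDerivAt hzb b)

lemma fderiv_R1_apply {n : ℕ} (i0 j : Fin n) (a b : ℕ) (w v : Phase n) :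
    fderiv ℝ (fun w => (zf i0 w ^ a * zbf j w ^ b).im) w v
      = (zf i0 w ^ a * ((b : ℂ) * zbf j w ^ (b - 1)) * zbL j v
          + zbf j w ^ b * ((a : ℂ) * zf i0 w ^ (a - 1)) * zfL i0 v).im := by
  have hg := hasFDerivAt_g i0 j a b w
  have h : HasFDerivAt (fun w => (zf i0 w ^ a * zbf j w ^ b).im)
      (Complex.imCLM.comp ((zf i0 w ^ a • (((b : ℂ) * zbf j w ^ (b - 1)) • zbL j)) +
       (zbf j w ^ b • (((a : ℂ) * zf i0 w ^ (a - 1)) • zfL i0)))) w :=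
    (Complex.imCLM.hasFDerivAt.comp w hg)
  rw [h.fderiv]
  simp [mul_assoc]

lemma zf_single_x {n : ℕ} (j k : Fin n) (c : ℝ) :
    zf j ((Pi.single k c : Fin n → ℝ), (0 : Fin n → ℝ)) =
      ((if j = k then (c : ℂ) else 0)) / (Real.sqrt 2 : ℝ) := by
  simp [zf, Pi.single_apply]
  split <;> simp

lemma zf_single_p {n : ℕ} (j k : Fin n) (c : ℝ) :
    zf j ((0 : Fin n → ℝ), (Pi.single k c : Fin n → ℝ)) =
      (Complex.I * (if j = k then (c : ℂ) else 0)) / (Real.sqrt 2 : ℝ) := by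
  simp [zf, Pi.single_apply]
  split <;> simp

lemma zbf_single_x {n : ℕ} (j k : Fin n) (c : ℝ) :
    zbf j ((Pi.single k c : Fin n → ℝ), (0 : Fin n → ℝ)) =
      ((if j = k then (c : ℂ) else 0)) / (Real.sqrt 2 : ℝ) := by
  simp [zbf, Pi.single_apply]
  split <;> simp

lemma zbf_single_p {n : ℕ} (j k : Fin n) (c : ℝ) :
    zbf j ((0 : Fin n → ℝ), (Pi.single k c : Fin n → ℝ)) =
      (-(Complex.I * (if j = k then (c : ℂ) else 0))) / (Real.sqrt 2 : ℝ) := by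
  simp [zbf, Pi.single_apply]
  split <;> simp

lemma fderiv_F1_x {n : ℕ} (l : Fin n → ℤ) (w : Phase n) (k : Fin n) :
    fderiv ℝ (fun w => ∑ j : Fin n, (l j : ℝ) * IR j w) w
      ((Pi.single k 1 : Fin n → ℝ), (0 : Fin n → ℝ)) = (l k : ℝ) * w.1 k := by
  rw [fderiv_F1_apply]
  simp [Pi.single_apply]

lemma fderiv_F1_p {n : ℕ} (l : Fin n → ℤ) (w : Phase n) (k : Fin n) :
    fderiv ℝ (fun w => ∑ j : Fin n, (l j : ℝ) * IR j w) w
      ((0 : Fin n → ℝ), (Pi.single k 1 : Fin n → ℝ)) = (l k : ℝ) * w.2 k := by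
  rw [fderiv_F1_apply]
  simp [Pi.single_apply]

lemma pb_F1_IR {n : ℕ} (l : Fin n → ℤ) (j : Fin n) :
    pbR (fun w => ∑ m : Fin n, (l m : ℝ) * IR m w) (fun w => IR j w) = 0 := by
  funext w
  show (∑ k : Fin n, _) = (0 : ℝ)
  apply Finset.sum_eq_zero
  intro k _
  rw [fderiv_F1_x, fderiv_F1_p, fderiv_IR_apply, fderiv_IR_apply]
  simp [Pi.single_apply]
  split_ifs with h
  · subst h; ring
  · ring

lemma sqrt2_ne : ((Real.sqrt 2 : ℝ) : ℂ) ≠ 0 :=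
  Complex.ofReal_ne_zero.mpr (by positivity)

lemma pb_F1_R1 {n : ℕ} (l : Fin n → ℤ) (hl : ∀ j, 1 ≤ l j) (i0 j : Fin n) (hij : j ≠ i0) :
    pbR (fun w => ∑ m : Fin n, (l m : ℝ) * IR m w)
      (fun w => (zf i0 w ^ (l j).toNat * zbf j w ^ (l i0).toNat).im) = 0 := by
  funext w
  obtain ⟨a, ha⟩ : ∃ a, (l j).toNat = a + 1 := ⟨(l j).toNat - 1, by have := hl j; omega⟩
  obtain ⟨b, hb⟩ : ∃ b, (l i0).toNat = b + 1 := ⟨(l i0).toNat - 1, by have := hl i0; omega⟩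
  have hlj : (l j : ℝ) = ((a + 1 : ℕ) : ℝ) := by
    have : ((l j).toNat : ℤ) = l j := Int.toNat_of_nonneg (by have := hl j; omega)
    rw [ha] at this; exact_mod_cast this.symm
  have hli0 : (l i0 : ℝ) = ((b + 1 : ℕ) : ℝ) := by
    have : ((l i0).toNat : ℤ) = l i0 := Int.toNat_of_nonneg (by have := hl i0; omega)
    rw [hb] at this; exact_mod_cast this.symm
  have hsZ : ((Real.sqrt 2 : ℝ) : ℂ) * zf i0 w = (w.1 i0 : ℂ) + Complex.I * (w.2 i0 : ℂ) := by
    rw [zf, mul_comm, div_mul_cancel₀ _ sqrt2_ne]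
  have hsW : ((Real.sqrt 2 : ℝ) : ℂ) * zbf j w = (w.1 j : ℂ) - Complex.I * (w.2 j : ℂ) := by
    rw [zbf, mul_comm, div_mul_cancel₀ _ sqrt2_ne]
  have h1 : (w.2 i0 : ℂ) - Complex.I * (w.1 i0 : ℂ)
      = -Complex.I * (((Real.sqrt 2 : ℝ) : ℂ) * zf i0 w) := by
    rw [hsZ]; linear_combination ((w.2 i0 : ℂ)) * Complex.I_sq
  have h2 : (w.2 j : ℂ) + Complex.I * (w.1 j : ℂ)
      = Complex.I * (((Real.sqrt 2 : ℝ) : ℂ) * zbf j w) := by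
    rw [hsW]; linear_combination ((w.2 j : ℂ)) * Complex.I_sq
  show (∑ k : Fin n, _) = (0 : ℝ)
  rw [ha, hb]
  -- reduce the sum to the two indices i0 and j
  have hzero : ∀ k ∈ (Finset.univ : Finset (Fin n)), k ∉ ({i0, j} : Finset (Fin n)) →
      (fderiv ℝ (fun w => ∑ m : Fin n, (l m : ℝ) * IR m w) w
          ((0 : Fin n → ℝ), Pi.single k (1 : ℝ)) *
        fderiv ℝ (fun w => (zf i0 w ^ (a + 1) * zbf j w ^ (b + 1)).im) w
          (Pi.single k (1 : ℝ), (0 : Fin n → ℝ)) -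
      fderiv ℝ (fun w => ∑ m : Fin n, (l m : ℝ) * IR m w) w
          (Pi.single k (1 : ℝ), (0 : Fin n → ℝ)) *
        fderiv ℝ (fun w => (zf i0 w ^ (a + 1) * zbf j w ^ (b + 1)).im) w
          ((0 : Fin n → ℝ), Pi.single k (1 : ℝ))) = 0 := by
    intro k _ hk
    simp only [Finset.mem_insert, Finset.mem_singleton, not_or] at hk
    rw [fderiv_F1_x, fderiv_F1_p, fderiv_R1_apply, fderiv_R1_apply]
    simp only [zbL_apply, zfL_apply, zf_single_x, zf_single_p, zbf_single_x, zbf_single_p]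
    rw [if_neg (fun h : j = k => hk.2 h.symm), if_neg (fun h : i0 = k => hk.1 h.symm)]
    simp
  rw [← Finset.sum_subset (Finset.subset_univ ({i0, j} : Finset (Fin n))) hzero,
      Finset.sum_pair (Ne.symm hij)]
  rw [fderiv_F1_x, fderiv_F1_p, fderiv_F1_x, fderiv_F1_p,
      fderiv_R1_apply, fderiv_R1_apply, fderiv_R1_apply, fderiv_R1_apply]
  simp only [zbL_apply, zfL_apply, zf_single_x, zf_single_p, zbf_single_x, zbf_single_p]
  simp only [if_neg hij, if_neg (Ne.symm hij), if_pos rfl, eq_self_iff_true, if_true,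
    Complex.ofReal_one, mul_zero, zero_mul, mul_one, zero_div, add_zero, zero_add,
    neg_zero, mul_neg, Nat.add_sub_cancel]
  rw [hli0, hlj]
  have him : ∀ (r : ℝ) (u : ℂ), r * u.im = ((r : ℂ) * u).im :=
    fun r u => (Complex.im_ofReal_mul r u).symm
  simp only [him]
  rw [← Complex.sub_im, ← Complex.sub_im, ← Complex.add_im, ← Complex.zero_im]
  congr 1
  push_cast
  linear_combination (((b : ℂ) + 1) * ((a : ℂ) + 1) * zf i0 w ^ a * zbf j w ^ (b + 1)
      / ((Real.sqrt 2 : ℝ) : ℂ)) * h1 +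
    (((a : ℂ) + 1) * ((b : ℂ) + 1) * zf i0 w ^ (a + 1) * zbf j w ^ b
      / ((Real.sqrt 2 : ℝ) : ℂ)) * h2

/-- Off the zero set of a somewhere-nonvanishing analytic function is dense. -/
lemma dense_ne_zero_of_analytic {E : Type*} [NormedAddCommGroup E] [NormedSpace ℝ E]
    (f : E → ℝ) (hf : ∀ x, AnalyticAt ℝ f x) (x0 : E) (hx0 : f x0 ≠ 0) :
    Dense {x | f x ≠ 0} := by
  rw [dense_iff_inter_open]
  rintro V hV ⟨w, hw⟩
  by_contra hemp
  push_neg at hemp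
  have hzero : ∀ x ∈ V, f x = 0 := by
    intro x hx
    by_contra hne
    exact (Set.eq_empty_iff_forall_notMem.mp hemp x) ⟨hx, hne⟩
  set L : ℝ → E := fun t => w + t • (x0 - w) with hL
  have hLa : ∀ t : ℝ, AnalyticAt ℝ L t := by
    intro t
    exact analyticAt_const.add ((analyticAt_id).smul analyticAt_const)
  have hψ : AnalyticOnNhd ℝ (fun t => f (L t)) Set.univ :=
    fun t _ => (hf (L t)).comp (hLa t)
  have hL0 : L 0 = w := by simp [hL]
  have hL1 : L 1 = x0 := by simp [hL]
  have hnb : ∀ᶠ t in nhds (0 : ℝ), f (L t) = (0 : E → ℝ) (L t) := by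
    have hcont : Continuous L := by fun_prop
    have : L ⁻¹' V ∈ nhds (0 : ℝ) :=
      hcont.continuousAt.preimage_mem_nhds (by rw [hL0]; exact hV.mem_nhds hw)
    filter_upwards [this] with t ht
    exact hzero _ ht
  have := AnalyticOnNhd.eqOn_of_preconnected_of_eventuallyEq hψ
    (analyticOnNhd_const) isPreconnected_univ (Set.mem_univ (0 : ℝ)) hnb (Set.mem_univ (1 : ℝ))
  have this : f x0 = 0 := by rw [← hL1]; exact this
  exact hx0 this

def gre {n : ℕ} (l : Fin n → ℤ) (i0 k : Fin n) : Phase n → ℝ :=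
  fun w => (zf i0 w ^ (l k).toNat * zbf k w ^ (l i0).toNat).re

def Phi {n : ℕ} (l : Fin n → ℤ) (i0 : Fin n) : Phase n → ℝ :=
  fun w => (∏ k : Fin n, w.1 k) * ∏ k : Fin n, (if k = i0 then 1 else gre l i0 k w)

lemma analyticAt_zf {n : ℕ} (j : Fin n) (w : Phase n) : AnalyticAt ℝ (zf j) w :=
  (zfL j).analyticAt w

lemma analyticAt_zbf {n : ℕ} (j : Fin n) (w : Phase n) : AnalyticAt ℝ (zbf j) w :=
  (zbL j).analyticAt w

lemma analyticAt_Phi {n : ℕ} (l : Fin n → ℤ) (i0 : Fin n) (w : Phase n) :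
    AnalyticAt ℝ (Phi l i0) w := by
  apply AnalyticAt.mul
  · exact Finset.analyticAt_fun_prod _ fun k _ => ((ex k).analyticAt w)
  · apply Finset.analyticAt_fun_prod
    intro k _
    by_cases hk : k = i0
    · simp only [hk, if_pos rfl]; exact analyticAt_const
    · simp only [if_neg hk]
      exact (Complex.reCLM.analyticAt _).comp
        (((analyticAt_zf i0 w).pow _).mul ((analyticAt_zbf k w).pow _))

lemma continuous_Phi {n : ℕ} (l : Fin n → ℤ) (i0 : Fin n) : Continuous (Phi l i0) := by
  apply Continuous.mul
  · exact continuous_finset_prod _ fun k _ => (ex k).continuous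
  · apply continuous_finset_prod
    intro k _
    by_cases hk : k = i0
    · simp only [hk, if_pos rfl]; exact continuous_const
    · simp only [if_neg hk]
      exact Complex.continuous_re.comp
        ((((zfL i0).continuous).pow _).mul (((zbL k).continuous).pow _))

lemma Phi_witness {n : ℕ} (l : Fin n → ℤ) (i0 : Fin n) :
    Phi l i0 ((fun _ => Real.sqrt 2, fun _ => 0) : Phase n) ≠ 0 := by
  have h2 : Real.sqrt 2 ≠ 0 := by positivity
  have hz : ∀ j : Fin n, zf j ((fun _ => Real.sqrt 2, fun _ => 0) : Phase n) = 1 := by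
    intro j; simp [zf]
  have hzb : ∀ j : Fin n, zbf j ((fun _ => Real.sqrt 2, fun _ => 0) : Phase n) = 1 := by
    intro j; simp [zbf]
  simp [Phi, gre, hz, hzb, h2]

lemma zf_u {n : ℕ} (jj k : Fin n) (r q : ℝ) :
    zf jj ((Pi.single k r : Fin n → ℝ), (Pi.single k q : Fin n → ℝ)) =
      (if jj = k then ((r : ℂ) + Complex.I * (q : ℂ)) else 0) / ((Real.sqrt 2 : ℝ) : ℂ) := by
  simp only [zf, Pi.single_apply]
  split <;> simp

lemma zbf_u {n : ℕ} (jj k : Fin n) (r q : ℝ) :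
    zbf jj ((Pi.single k r : Fin n → ℝ), (Pi.single k q : Fin n → ℝ)) =
      (if jj = k then ((r : ℂ) - Complex.I * (q : ℂ)) else 0) / ((Real.sqrt 2 : ℝ) : ℂ) := by
  simp only [zbf, Pi.single_apply]
  split <;> simp

lemma DF1_at_u {n : ℕ} (l : Fin n → ℤ) (w : Phase n) (k : Fin n) :
    fderiv ℝ (fun w => ∑ m : Fin n, (l m : ℝ) * IR m w) w
      ((Pi.single k (-w.2 k) : Fin n → ℝ), (Pi.single k (w.1 k) : Fin n → ℝ)) = 0 := by
  rw [fderiv_F1_apply]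
  apply Finset.sum_eq_zero
  intro m _
  simp only [Pi.single_apply]
  rcases eq_or_ne m k with h | h
  · subst h; simp only [if_pos rfl, if_true]; ring
  · simp [h]

lemma DIR_at_u {n : ℕ} (j : Fin n) (w : Phase n) (k : Fin n) :
    fderiv ℝ (IR j) w
      ((Pi.single k (-w.2 k) : Fin n → ℝ), (Pi.single k (w.1 k) : Fin n → ℝ)) = 0 := by
  rw [fderiv_IR_apply]
  simp only [Pi.single_apply]
  rcases eq_or_ne j k with h | h
  · subst h; simp only [if_pos rfl, if_true]; ring
  · simp [h]

lemma DIR_at_x {n : ℕ} (j : Fin n) (w : Phase n) (k : Fin n) :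
    fderiv ℝ (IR j) w ((Pi.single k 1 : Fin n → ℝ), (0 : Fin n → ℝ)) =
      if j = k then w.1 k else 0 := by
  rw [fderiv_IR_apply]
  simp only [Pi.single_apply]
  rcases eq_or_ne j k with h | h
  · subst h; simp [if_pos rfl]
  · simp [h]

lemma DR_at_u {n : ℕ} (l : Fin n → ℤ) (hl : ∀ j, 1 ≤ l j) (i0 k : Fin n) (hk : k ≠ i0)
    (w : Phase n) :
    fderiv ℝ (fun w => (zf i0 w ^ (l k).toNat * zbf k w ^ (l i0).toNat).im) w
      ((Pi.single k (-w.2 k) : Fin n → ℝ), (Pi.single k (w.1 k) : Fin n → ℝ)) =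
      -(((l i0).toNat : ℝ)) * gre l i0 k w := by
  obtain ⟨b, hb⟩ : ∃ b, (l i0).toNat = b + 1 := ⟨(l i0).toNat - 1, by have := hl i0; omega⟩
  rw [hb, fderiv_R1_apply]
  simp only [zbL_apply, zfL_apply, zf_u, zbf_u]
  simp only [if_true]
  have hsW : ((Real.sqrt 2 : ℝ) : ℂ) * zbf k w = (w.1 k : ℂ) - Complex.I * (w.2 k : ℂ) := by
    rw [zbf, mul_comm, div_mul_cancel₀ _ sqrt2_ne]
  have h4 : ((-w.2 k : ℝ) : ℂ) - Complex.I * ((w.1 k : ℝ) : ℂ)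
      = -Complex.I * (((Real.sqrt 2 : ℝ) : ℂ) * zbf k w) := by
    rw [hsW]; push_cast; linear_combination (-(w.2 k : ℂ)) * Complex.I_sq
  rw [h4, if_neg (fun h : i0 = k => hk h.symm)]
  have h5 : zf i0 w ^ (l k).toNat * ((((b : ℕ) + 1 : ℕ) : ℂ) * zbf k w ^ (b + 1 - 1)) *
        (-Complex.I * (((Real.sqrt 2 : ℝ) : ℂ) * zbf k w) / ((Real.sqrt 2 : ℝ) : ℂ)) +
      zbf k w ^ (b + 1) * ((((l k).toNat : ℕ) : ℂ) * zf i0 w ^ ((l k).toNat - 1)) *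
        (0 / ((Real.sqrt 2 : ℝ) : ℂ))
      = -Complex.I * (((b : ℂ) + 1) * (zf i0 w ^ (l k).toNat * zbf k w ^ (b + 1))) := by
    rw [Nat.add_sub_cancel]
    field_simp [sqrt2_ne]
    push_cast
    ring
  rw [h5]
  rw [gre, hb]
  simp [Complex.mul_im, Complex.mul_re]
  push_cast
  ring

lemma DR_at_u_ne {n : ℕ} (l : Fin n → ℤ) (i0 m k : Fin n) (hik : i0 ≠ k) (hmk : m ≠ k)
    (w : Phase n) :
    fderiv ℝ (fun w => (zf i0 w ^ (l m).toNat * zbf m w ^ (l i0).toNat).im) w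
      ((Pi.single k (-w.2 k) : Fin n → ℝ), (Pi.single k (w.1 k) : Fin n → ℝ)) = 0 := by
  rw [fderiv_R1_apply]
  simp only [zbL_apply, zfL_apply, zf_u, zbf_u]
  rw [if_neg hik, if_neg hmk]
  simp

lemma indep_at {n : ℕ} (l : Fin n → ℤ) (hl : ∀ j, 1 ≤ l j) (i0 : Fin n) (w : Phase n)
    (hx : ∀ k, w.1 k ≠ 0) (hg : ∀ k, k ≠ i0 → gre l i0 k w ≠ 0) :
    LinearIndependent ℝ (fun i => fderiv ℝ (Sum.elim
        (fun _ : Unit => fun w => ∑ m : Fin n, (l m : ℝ) * IR m w)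
        (Sum.elim (fun j : {j : Fin n // j ≠ i0} => fun w => IR j.1 w)
          (fun j : {j : Fin n // j ≠ i0} =>
            fun w => (zf i0 w ^ (l j.1).toNat * zbf j.1 w ^ (l i0).toNat).im)) i) w) := by
  rw [Fintype.linearIndependent_iff]
  intro c hc
  have happ : ∀ v : Phase n,
      c (Sum.inl ()) * fderiv ℝ (fun w => ∑ m : Fin n, (l m : ℝ) * IR m w) w v
      + ((∑ j : {j : Fin n // j ≠ i0}, c (Sum.inr (Sum.inl j)) * fderiv ℝ (IR j.1) w v)
      + (∑ j : {j : Fin n // j ≠ i0}, c (Sum.inr (Sum.inr j)) *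
          fderiv ℝ (fun w => (zf i0 w ^ (l j.1).toNat * zbf j.1 w ^ (l i0).toNat).im) w v)) = 0 := by
    intro v
    have h0 := congrArg (fun T : Phase n →L[ℝ] ℝ => T v) hc
    simpa [Fintype.sum_sum_type, ContinuousLinearMap.sum_apply,
      ContinuousLinearMap.smul_apply, smul_eq_mul] using h0
  have hli0R : (((l i0).toNat : ℝ)) ≠ 0 := by
    have := hl i0
    exact Nat.cast_ne_zero.mpr (by omega)
  -- Step 1: the R-coefficients vanish
  have hcR : ∀ j : {j : Fin n // j ≠ i0}, c (Sum.inr (Sum.inr j)) = 0 := by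
    intro j
    have h := happ ((Pi.single j.1 (-w.2 j.1) : Fin n → ℝ),
      (Pi.single j.1 (w.1 j.1) : Fin n → ℝ))
    rw [DF1_at_u] at h
    rw [Finset.sum_eq_zero (fun m _ => by rw [DIR_at_u, mul_zero])] at h
    rw [Finset.sum_eq_single j (fun m _ hm => by
        rw [DR_at_u_ne l i0 m.1 j.1 (fun hh => j.2 hh.symm)
          (fun hh => hm (Subtype.ext hh)), mul_zero])
      (fun hmem => absurd (Finset.mem_univ j) hmem)] at h
    rw [DR_at_u l hl i0 j.1 j.2] at h
    simp only [mul_zero, zero_add, add_zero] at h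
    rcases mul_eq_zero.mp h with h' | h'
    · exact h'
    · exact absurd h' (by
        intro hh
        rcases mul_eq_zero.mp hh with h2 | h2
        · exact hli0R (neg_eq_zero.mp h2)
        · exact hg j.1 j.2 h2)
  -- Step 2: the F1-coefficient vanishes
  have hc0 : c (Sum.inl ()) = 0 := by
    have h := happ ((Pi.single i0 (1 : ℝ) : Fin n → ℝ), (0 : Fin n → ℝ))
    rw [fderiv_F1_x] at h
    rw [Finset.sum_eq_zero (fun m _ => by
        rw [DIR_at_x]
        rw [if_neg m.2, mul_zero])] at h
    rw [Finset.sum_eq_zero (fun m _ => by rw [hcR m, zero_mul])] at h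
    simp only [add_zero] at h
    rcases mul_eq_zero.mp h with h' | h'
    · exact h'
    · refine absurd h' (mul_ne_zero ?_ (hx i0))
      have h1 := hl i0
      have : (0 : ℝ) < (l i0 : ℝ) := by exact_mod_cast lt_of_lt_of_le zero_lt_one h1
      exact ne_of_gt this
  -- Step 3: the I-coefficients vanish
  have hcI : ∀ j : {j : Fin n // j ≠ i0}, c (Sum.inr (Sum.inl j)) = 0 := by
    intro j
    have h := happ ((Pi.single j.1 (1 : ℝ) : Fin n → ℝ), (0 : Fin n → ℝ))
    rw [fderiv_F1_x, hc0, zero_mul] at h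
    rw [Finset.sum_eq_single j (fun m _ hm => by
        rw [DIR_at_x, if_neg (fun hh => hm (Subtype.ext hh)), mul_zero])
      (fun hmem => absurd (Finset.mem_univ j) hmem)] at h
    rw [DIR_at_x, if_pos rfl] at h
    rw [Finset.sum_eq_zero (fun m _ => by rw [hcR m, zero_mul])] at h
    simp only [zero_add, add_zero] at h
    rcases mul_eq_zero.mp h with h' | h'
    · exact h'
    · exact absurd h' (hx j.1)
  rintro (⟨⟩ | j | j)
  · exact hc0
  · exact hcI j
  · exact hcR j

/-- for `l_j ≥ 1`, the functions `(F₁, I₂, …, I_n, R_{12}, …, R_{1n})`,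
with `R_{1j} = Im(z₁^{l_j} z̄_j^{l₁})`, are in involution with `F₁` and functionally
independent: they form an integrable set with single central element `F₁`. -/
theorem statement2 (n : ℕ) (hn : 2 ≤ n) (l : Fin n → ℤ) (hl : ∀ j, 1 ≤ l j)
    (i0 : Fin n) (hi0 : (i0 : ℕ) = 0)
    (F1 : Phase n → ℝ) (hF1 : F1 = fun w => ∑ j : Fin n, (l j : ℝ) * IR j w)
    (R1 : Fin n → Phase n → ℝ)
    (hR1 : R1 = fun j w => (zf i0 w ^ (l j).toNat * zbf j w ^ (l i0).toNat).im) :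
    (∀ j : Fin n, j ≠ i0 → pbR F1 (fun w => IR j w) = 0) ∧
    (∀ j : Fin n, j ≠ i0 → pbR F1 (R1 j) = 0) ∧
    FunctionallyIndependent
      (Sum.elim (fun _ : Unit => F1)
        (Sum.elim (fun j : {j : Fin n // j ≠ i0} => fun w => IR j.1 w)
          (fun j : {j : Fin n // j ≠ i0} => R1 j.1))) := by
  subst hF1 hR1
  refine ⟨fun j _ => pb_F1_IR l j, fun j hj => pb_F1_R1 l hl i0 j hj, ?_⟩
  refine ⟨{w : Phase n | Phi l i0 w ≠ 0}, ?_, ?_, ?_⟩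
  · exact (isClosed_singleton.preimage (continuous_Phi l i0)).isOpen_compl
  · exact dense_ne_zero_of_analytic _ (analyticAt_Phi l i0) _ (Phi_witness l i0)
  · intro w hw
    have hΦ : Phi l i0 w ≠ 0 := hw
    rw [Phi] at hΦ
    rcases mul_ne_zero_iff.mp hΦ with ⟨h1, h2⟩
    have hx : ∀ k, w.1 k ≠ 0 := fun k =>
      Finset.prod_ne_zero_iff.mp h1 k (Finset.mem_univ k)
    have hg : ∀ k, k ≠ i0 → gre l i0 k w ≠ 0 := by
      intro k hk
      have := Finset.prod_ne_zero_iff.mp h2 k (Finset.mem_univ k)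
      rwa [if_neg hk] at this
    exact indep_at l hl i0 w hx hg


end
end

section
/- For all group indices h, j = 1,…,u the following hold: {W_h, W_j} = 0; {W_h, W̄_j} = 4i δ_{hj} K_h; {W_h, K_j} = 2i δ_{hj} W_h; {W_h, P_{ab}} = 0 and {K_h, P_{ab}} = 0 for all p_{j−1} < a < b ≤ p_j; and W_h W̄_h = K_h² − P_{(h)}², where W̄_h denotes the complex conjugate of W_h. -/
noncomputable section

open Complex

/-- `K_h = ∑_{p_{h-1} < i ≤ p_h} ε_i I_i` (complex-valued). Here the partition of
`{1,…,n}` (0-indexed: `{0,…,n-1}`) into `u` groups is given by the boundaries `pf`. -/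
def Kc {n u : ℕ} (ε : Fin n → ℤ) (pf : Fin (u + 1) → ℕ) (h : Fin u) (w : Phase n) : ℂ :=
  ∑ i : Fin n,
    if pf h.castSucc ≤ (i : ℕ) ∧ (i : ℕ) < pf h.succ then (ε i : ℂ) * Iact i w else 0

/-- `K_h` as a real-valued function. -/
def KR {n u : ℕ} (ε : Fin n → ℤ) (pf : Fin (u + 1) → ℕ) (h : Fin u) (w : Phase n) : ℝ :=
  ∑ i : Fin n,
    if pf h.castSucc ≤ (i : ℕ) ∧ (i : ℕ) < pf h.succ then (ε i : ℝ) * IR i w else 0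

/-- `W_h = ∑_{p_{h-1} < i ≤ p_h} ε_i w_i²`. -/
def Wc {n u : ℕ} (ε : Fin n → ℤ) (pf : Fin (u + 1) → ℕ) (h : Fin u) (w : Phase n) : ℂ :=
  ∑ i : Fin n,
    if pf h.castSucc ≤ (i : ℕ) ∧ (i : ℕ) < pf h.succ then (ε i : ℂ) * wfun ε i w ^ 2 else 0

/-- `W̄_h`, the complex conjugate of `W_h`. -/
def Wbc {n u : ℕ} (ε : Fin n → ℤ) (pf : Fin (u + 1) → ℕ) (h : Fin u) (w : Phase n) : ℂ :=
  ∑ i : Fin n,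
    if pf h.castSucc ≤ (i : ℕ) ∧ (i : ℕ) < pf h.succ then (ε i : ℂ) * wbfun ε i w ^ 2 else 0

/-- `P_{(h)}² = ∑_{p_{h-1} < i < j ≤ p_h} ε_i ε_j P_{ij}²`. -/
def Psqg {n u : ℕ} (ε : Fin n → ℤ) (pf : Fin (u + 1) → ℕ) (h : Fin u) (w : Phase n) : ℂ :=
  ∑ i : Fin n, ∑ j : Fin n,
    if pf h.castSucc ≤ (i : ℕ) ∧ i < j ∧ (j : ℕ) < pf h.succ then
      ((ε i * ε j : ℤ) : ℂ) * Pf ε i j w ^ 2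
    else 0

/-- `R_m = ∏_h Ω_h^{m_h}`, with `Ω_h^{m_h} = W_h^{m_h}` for `m_h ≥ 0` and
`Ω_h^{m_h} = W̄_h^{−m_h}` for `m_h < 0`. -/
def RWc {n u : ℕ} (ε : Fin n → ℤ) (pf : Fin (u + 1) → ℕ) (m : Fin u → ℤ) (w : Phase n) : ℂ :=
  ∏ h : Fin u,
    if 0 ≤ m h then Wc ε pf h w ^ (m h).toNat else Wbc ε pf h w ^ (-(m h)).toNat


-- ## derivatives

def Cx {n : ℕ} (i : Fin n) : Phase n →L[ℝ] ℂ :=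
  Complex.ofRealCLM.comp ((ContinuousLinearMap.proj i).comp
    (ContinuousLinearMap.fst ℝ (Fin n → ℝ) (Fin n → ℝ)))

def Cp {n : ℕ} (i : Fin n) : Phase n →L[ℝ] ℂ :=
  Complex.ofRealCLM.comp ((ContinuousLinearMap.proj i).comp
    (ContinuousLinearMap.snd ℝ (Fin n → ℝ) (Fin n → ℝ)))

def Lzf {n : ℕ} (i : Fin n) : Phase n →L[ℝ] ℂ :=
  (((Real.sqrt 2 : ℝ) : ℂ))⁻¹ • (Cx i + Complex.I • Cp i)

def Lzbf {n : ℕ} (i : Fin n) : Phase n →L[ℝ] ℂ :=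
  (((Real.sqrt 2 : ℝ) : ℂ))⁻¹ • (Cx i - Complex.I • Cp i)

def Lw {n : ℕ} (ε : Fin n → ℤ) (i : Fin n) : Phase n →L[ℝ] ℂ :=
  if ε i = 1 then Lzf i else Lzbf i

def Lwb {n : ℕ} (ε : Fin n → ℤ) (i : Fin n) : Phase n →L[ℝ] ℂ :=
  if ε i = 1 then Lzbf i else Lzf i

lemma hasFDerivAt_zf {n : ℕ} (i : Fin n) (w : Phase n) :
    HasFDerivAt (zf i) (Lzf i) w := by
  have hx : HasFDerivAt (fun w : Phase n => ((w.1 i : ℝ) : ℂ)) (Cx i) w := (Cx i).hasFDerivAt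
  have hp : HasFDerivAt (fun w : Phase n => ((w.2 i : ℝ) : ℂ)) (Cp i) w := (Cp i).hasFDerivAt
  have h := (hx.add (hp.const_mul Complex.I)).const_mul ((((Real.sqrt 2 : ℝ) : ℂ))⁻¹)
  have he : zf i = fun w : Phase n =>
      (((Real.sqrt 2 : ℝ) : ℂ))⁻¹ * (((w.1 i : ℝ) : ℂ) + Complex.I * ((w.2 i : ℝ) : ℂ)) := by
    funext w; rw [zf]; ring
  rw [he]
  exact h

lemma hasFDerivAt_zbf {n : ℕ} (i : Fin n) (w : Phase n) :
    HasFDerivAt (zbf i) (Lzbf i) w := by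
  have hx : HasFDerivAt (fun w : Phase n => ((w.1 i : ℝ) : ℂ)) (Cx i) w := (Cx i).hasFDerivAt
  have hp : HasFDerivAt (fun w : Phase n => ((w.2 i : ℝ) : ℂ)) (Cp i) w := (Cp i).hasFDerivAt
  have h := (hx.sub (hp.const_mul Complex.I)).const_mul ((((Real.sqrt 2 : ℝ) : ℂ))⁻¹)
  have he : zbf i = fun w : Phase n =>
      (((Real.sqrt 2 : ℝ) : ℂ))⁻¹ * (((w.1 i : ℝ) : ℂ) - Complex.I * ((w.2 i : ℝ) : ℂ)) := by
    funext w; rw [zbf]; ring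
  rw [he]
  exact h

lemma hasFDerivAt_wfun {n : ℕ} (ε : Fin n → ℤ) (i : Fin n) (w : Phase n) :
    HasFDerivAt (wfun ε i) (Lw ε i) w := by
  unfold wfun Lw
  by_cases h : ε i = 1 <;> simp only [h, if_pos, if_true, if_neg, if_false]
  · exact hasFDerivAt_zf i w
  · exact hasFDerivAt_zbf i w

lemma hasFDerivAt_wbfun {n : ℕ} (ε : Fin n → ℤ) (i : Fin n) (w : Phase n) :
    HasFDerivAt (wbfun ε i) (Lwb ε i) w := by
  unfold wbfun Lwb
  by_cases h : ε i = 1 <;> simp only [h, if_pos, if_true, if_neg, if_false]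
  · exact hasFDerivAt_zbf i w
  · exact hasFDerivAt_zf i w

lemma hasFDerivAt_sq {n : ℕ} {f : Phase n → ℂ} {L : Phase n →L[ℝ] ℂ} {w : Phase n}
    (hf : HasFDerivAt f L w) :
    HasFDerivAt (fun w => f w ^ 2) ((2 * f w) • L) w := by
  have h := hf.mul hf
  have : (fun w => f w ^ 2) = fun w => f w * f w := by funext w; ring
  rw [this]
  have hL : (2 * f w) • L = f w • L + f w • L := by module
  rw [hL]
  exact h

lemma hasFDerivAt_Wc {n u : ℕ} (ε : Fin n → ℤ) (pf : Fin (u + 1) → ℕ) (h : Fin u)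
    (w : Phase n) :
    HasFDerivAt (Wc ε pf h)
      (∑ i : Fin n, if pf h.castSucc ≤ (i : ℕ) ∧ (i : ℕ) < pf h.succ then
        ((ε i : ℂ) * (2 * wfun ε i w)) • Lw ε i else 0) w := by
  unfold Wc
  apply HasFDerivAt.fun_sum
  intro i _
  by_cases hc : pf h.castSucc ≤ (i : ℕ) ∧ (i : ℕ) < pf h.succ
  · simp only [hc, if_true]
    have := (hasFDerivAt_sq (hasFDerivAt_wfun ε i w)).const_mul ((ε i : ℂ))
    rw [mul_smul]
    exact this
  · simp only [hc, if_false]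
    exact hasFDerivAt_const 0 w

lemma hasFDerivAt_Wbc {n u : ℕ} (ε : Fin n → ℤ) (pf : Fin (u + 1) → ℕ) (h : Fin u)
    (w : Phase n) :
    HasFDerivAt (Wbc ε pf h)
      (∑ i : Fin n, if pf h.castSucc ≤ (i : ℕ) ∧ (i : ℕ) < pf h.succ then
        ((ε i : ℂ) * (2 * wbfun ε i w)) • Lwb ε i else 0) w := by
  unfold Wbc
  apply HasFDerivAt.fun_sum
  intro i _
  by_cases hc : pf h.castSucc ≤ (i : ℕ) ∧ (i : ℕ) < pf h.succ
  · simp only [hc, if_true]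
    have := (hasFDerivAt_sq (hasFDerivAt_wbfun ε i w)).const_mul ((ε i : ℂ))
    rw [mul_smul]
    exact this
  · simp only [hc, if_false]
    exact hasFDerivAt_const 0 w

lemma hasFDerivAt_Kc {n u : ℕ} (ε : Fin n → ℤ) (pf : Fin (u + 1) → ℕ) (h : Fin u)
    (w : Phase n) :
    HasFDerivAt (Kc ε pf h)
      (∑ i : Fin n, if pf h.castSucc ≤ (i : ℕ) ∧ (i : ℕ) < pf h.succ then
        (ε i : ℂ) • (zf i w • Lzbf i + zbf i w • Lzf i) else 0) w := by
  unfold Kc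
  apply HasFDerivAt.fun_sum
  intro i _
  by_cases hc : pf h.castSucc ≤ (i : ℕ) ∧ (i : ℕ) < pf h.succ
  · simp only [hc, if_true]
    have hm := (hasFDerivAt_zf i w).mul (hasFDerivAt_zbf i w)
    exact (hm.const_mul ((ε i : ℂ)) : HasFDerivAt (fun w => (ε i : ℂ) * Iact i w) _ w)
  · simp only [hc, if_false]
    exact hasFDerivAt_const 0 w

lemma hasFDerivAt_Pf {n : ℕ} (ε : Fin n → ℤ) (a b : Fin n) (w : Phase n) :
    HasFDerivAt (Pf ε a b)
      (Complex.I • ((wfun ε a w • Lwb ε b + wbfun ε b w • Lw ε a) -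
        (wfun ε b w • Lwb ε a + wbfun ε a w • Lw ε b))) w := by
  unfold Pf
  exact (((hasFDerivAt_wfun ε a w).mul (hasFDerivAt_wbfun ε b w)).sub
    ((hasFDerivAt_wfun ε b w).mul (hasFDerivAt_wbfun ε a w))).const_mul Complex.I

-- ## CLM evaluations

lemma Lzf_apply_x {n : ℕ} (i k : Fin n) :
    Lzf i ((Pi.single k (1:ℝ) : Fin n → ℝ), (0 : Fin n → ℝ))
      = if i = k then (((Real.sqrt 2 : ℝ) : ℂ))⁻¹ else 0 := by
  simp [Lzf, Cx, Cp, Pi.single_apply]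
  split <;> simp

lemma Lzf_apply_p {n : ℕ} (i k : Fin n) :
    Lzf i ((0 : Fin n → ℝ), (Pi.single k (1:ℝ) : Fin n → ℝ))
      = if i = k then Complex.I * (((Real.sqrt 2 : ℝ) : ℂ))⁻¹ else 0 := by
  simp [Lzf, Cx, Cp, Pi.single_apply]
  split <;> simp [mul_comm]

lemma Lzbf_apply_x {n : ℕ} (i k : Fin n) :
    Lzbf i ((Pi.single k (1:ℝ) : Fin n → ℝ), (0 : Fin n → ℝ))
      = if i = k then (((Real.sqrt 2 : ℝ) : ℂ))⁻¹ else 0 := by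
  simp [Lzbf, Cx, Cp, Pi.single_apply]
  split <;> simp

lemma Lzbf_apply_p {n : ℕ} (i k : Fin n) :
    Lzbf i ((0 : Fin n → ℝ), (Pi.single k (1:ℝ) : Fin n → ℝ))
      = if i = k then -(Complex.I * (((Real.sqrt 2 : ℝ) : ℂ))⁻¹) else 0 := by
  simp [Lzbf, Cx, Cp, Pi.single_apply]
  split <;> simp [mul_comm]

lemma Lw_apply_x {n : ℕ} (ε : Fin n → ℤ) (i k : Fin n) :
    Lw ε i ((Pi.single k (1:ℝ) : Fin n → ℝ), (0 : Fin n → ℝ))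
      = if i = k then (((Real.sqrt 2 : ℝ) : ℂ))⁻¹ else 0 := by
  unfold Lw; split <;> [exact Lzf_apply_x i k; exact Lzbf_apply_x i k]

lemma Lwb_apply_x {n : ℕ} (ε : Fin n → ℤ) (i k : Fin n) :
    Lwb ε i ((Pi.single k (1:ℝ) : Fin n → ℝ), (0 : Fin n → ℝ))
      = if i = k then (((Real.sqrt 2 : ℝ) : ℂ))⁻¹ else 0 := by
  unfold Lwb; split <;> [exact Lzbf_apply_x i k; exact Lzf_apply_x i k]

lemma Lw_apply_p {n : ℕ} (ε : Fin n → ℤ) (hε : ∀ i, ε i = 1 ∨ ε i = -1) (i k : Fin n) :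
    Lw ε i ((0 : Fin n → ℝ), (Pi.single k (1:ℝ) : Fin n → ℝ))
      = if i = k then (ε i : ℂ) * Complex.I * (((Real.sqrt 2 : ℝ) : ℂ))⁻¹ else 0 := by
  unfold Lw
  rcases hε i with h | h <;> rw [h]
  · rw [if_pos rfl, Lzf_apply_p]; split <;> push_cast <;> ring
  · rw [if_neg (by norm_num), Lzbf_apply_p]; split <;> push_cast <;> ring

lemma Lwb_apply_p {n : ℕ} (ε : Fin n → ℤ) (hε : ∀ i, ε i = 1 ∨ ε i = -1) (i k : Fin n) :
    Lwb ε i ((0 : Fin n → ℝ), (Pi.single k (1:ℝ) : Fin n → ℝ))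
      = if i = k then -((ε i : ℂ) * Complex.I * (((Real.sqrt 2 : ℝ) : ℂ))⁻¹) else 0 := by
  unfold Lwb
  rcases hε i with h | h <;> rw [h]
  · rw [if_pos rfl, Lzbf_apply_p]; split <;> push_cast <;> ring
  · rw [if_neg (by norm_num), Lzf_apply_p]; split <;> push_cast <;> ring

lemma eval_sum {n : ℕ} (k : Fin n) {c : Fin n → ℂ} {L : Fin n → Phase n →L[ℝ] ℂ}
    {P : Fin n → Prop} [DecidablePred P] {v : Phase n} {e : ℂ}
    (hL : ∀ i, L i v = if i = k then e else 0) :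
    (∑ i : Fin n, if P i then c i • L i else 0) v = if P k then c k * e else 0 := by
  rw [ContinuousLinearMap.sum_apply]
  rw [Finset.sum_eq_single_of_mem k (Finset.mem_univ k)]
  · by_cases hc : P k <;> simp [hc, hL k]
  · intro i _ hik
    by_cases hc : P i <;> simp [hc, hL i, hik]

local notation "s2i" => (((Real.sqrt 2 : ℝ) : ℂ))⁻¹

lemma s2i_mul_s2i : s2i * s2i = (2:ℂ)⁻¹ := by
  rw [← mul_inv]
  have h2 : ((Real.sqrt 2 : ℝ) : ℂ) * ((Real.sqrt 2 : ℝ) : ℂ) = 2 := by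
    norm_cast
    exact Real.mul_self_sqrt (by norm_num)
  rw [h2]

section evals
variable {n u : ℕ} (ε : Fin n → ℤ) (pf : Fin (u + 1) → ℕ) (h : Fin u) (w : Phase n) (k : Fin n)

lemma Dx_Wc :
    fderiv ℝ (Wc ε pf h) w ((Pi.single k (1:ℝ) : Fin n → ℝ), (0 : Fin n → ℝ)) =
      if pf h.castSucc ≤ (k : ℕ) ∧ (k : ℕ) < pf h.succ then
        (ε k : ℂ) * (2 * wfun ε k w) * s2i else 0 := by
  rw [(hasFDerivAt_Wc ε pf h w).fderiv]
  exact eval_sum k (fun i => Lw_apply_x ε i k)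

lemma Dp_Wc (hε : ∀ i, ε i = 1 ∨ ε i = -1) :
    fderiv ℝ (Wc ε pf h) w ((0 : Fin n → ℝ), (Pi.single k (1:ℝ) : Fin n → ℝ)) =
      if pf h.castSucc ≤ (k : ℕ) ∧ (k : ℕ) < pf h.succ then
        (ε k : ℂ) * (2 * wfun ε k w) * ((ε k : ℂ) * Complex.I * s2i) else 0 := by
  rw [(hasFDerivAt_Wc ε pf h w).fderiv]
  refine eval_sum k (fun i => ?_)
  rw [Lw_apply_p ε hε i k]
  by_cases hik : i = k
  · subst hik; simp
  · simp [hik]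

lemma Dx_Wbc :
    fderiv ℝ (Wbc ε pf h) w ((Pi.single k (1:ℝ) : Fin n → ℝ), (0 : Fin n → ℝ)) =
      if pf h.castSucc ≤ (k : ℕ) ∧ (k : ℕ) < pf h.succ then
        (ε k : ℂ) * (2 * wbfun ε k w) * s2i else 0 := by
  rw [(hasFDerivAt_Wbc ε pf h w).fderiv]
  exact eval_sum k (fun i => Lwb_apply_x ε i k)

lemma Dp_Wbc (hε : ∀ i, ε i = 1 ∨ ε i = -1) :
    fderiv ℝ (Wbc ε pf h) w ((0 : Fin n → ℝ), (Pi.single k (1:ℝ) : Fin n → ℝ)) =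
      if pf h.castSucc ≤ (k : ℕ) ∧ (k : ℕ) < pf h.succ then
        (ε k : ℂ) * (2 * wbfun ε k w) * (-((ε k : ℂ) * Complex.I * s2i)) else 0 := by
  rw [(hasFDerivAt_Wbc ε pf h w).fderiv]
  refine eval_sum k (fun i => ?_)
  rw [Lwb_apply_p ε hε i k]
  by_cases hik : i = k
  · subst hik; simp
  · simp [hik]

lemma Dx_Kc :
    fderiv ℝ (Kc ε pf h) w ((Pi.single k (1:ℝ) : Fin n → ℝ), (0 : Fin n → ℝ)) =
      if pf h.castSucc ≤ (k : ℕ) ∧ (k : ℕ) < pf h.succ then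
        (ε k : ℂ) * (zf k w * s2i + zbf k w * s2i) else 0 := by
  rw [(hasFDerivAt_Kc ε pf h w).fderiv]
  refine eval_sum k (fun i => ?_)
  rw [ContinuousLinearMap.add_apply, ContinuousLinearMap.smul_apply,
    ContinuousLinearMap.smul_apply, Lzf_apply_x, Lzbf_apply_x]
  by_cases hik : i = k
  · subst hik; simp
  · simp [hik]

lemma Dp_Kc :
    fderiv ℝ (Kc ε pf h) w ((0 : Fin n → ℝ), (Pi.single k (1:ℝ) : Fin n → ℝ)) =
      if pf h.castSucc ≤ (k : ℕ) ∧ (k : ℕ) < pf h.succ then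
        (ε k : ℂ) * (zf k w * (-(Complex.I * s2i)) + zbf k w * (Complex.I * s2i)) else 0 := by
  rw [(hasFDerivAt_Kc ε pf h w).fderiv]
  refine eval_sum k (fun i => ?_)
  rw [ContinuousLinearMap.add_apply, ContinuousLinearMap.smul_apply,
    ContinuousLinearMap.smul_apply, Lzf_apply_p, Lzbf_apply_p]
  by_cases hik : i = k
  · subst hik; simp
  · simp [hik]

lemma D_Pf (a b : Fin n) (v : Phase n) :
    fderiv ℝ (Pf ε a b) w v =
      Complex.I * ((wfun ε a w * Lwb ε b v + wbfun ε b w * Lw ε a v) -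
        (wfun ε b w * Lwb ε a v + wbfun ε a w * Lw ε b v)) := by
  rw [(hasFDerivAt_Pf ε a b w).fderiv]
  simp [ContinuousLinearMap.smul_apply, ContinuousLinearMap.add_apply,
    ContinuousLinearMap.sub_apply, smul_eq_mul]

end evals


lemma group_disj {u : ℕ} {pf : Fin (u + 1) → ℕ} (hpf : StrictMono pf) {h j : Fin u}
    (hne : h ≠ j) {m : ℕ}
    (h1 : pf h.castSucc ≤ m ∧ m < pf h.succ) (h2 : pf j.castSucc ≤ m ∧ m < pf j.succ) :
    False := by
  rcases lt_or_gt_of_ne hne with hlt | hlt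
  · have : pf h.succ ≤ pf j.castSucc := by
      apply hpf.monotone
      rw [Fin.le_def]
      simpa using hlt
    omega
  · have : pf j.succ ≤ pf h.castSucc := by
      apply hpf.monotone
      rw [Fin.le_def]
      simpa using hlt
    omega

section brackets
variable {n u : ℕ} (ε : Fin n → ℤ) (pf : Fin (u + 1) → ℕ)

lemma pb_Wc_Wc (hε : ∀ i, ε i = 1 ∨ ε i = -1) (h j : Fin u) :
    pb (Wc ε pf h) (Wc ε pf j) = 0 := by
  funext w
  simp only [pb, Pi.zero_apply]
  apply Finset.sum_eq_zero
  intro k _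
  rw [Dp_Wc ε pf h w k hε, Dx_Wc ε pf j w k, Dx_Wc ε pf h w k, Dp_Wc ε pf j w k hε]
  split_ifs <;> ring

lemma pb_Wc_Wbc (hpf : StrictMono pf) (hε : ∀ i, ε i = 1 ∨ ε i = -1) (h j : Fin u) :
    pb (Wc ε pf h) (Wbc ε pf j) =
    fun w => 4 * Complex.I * (if h = j then 1 else 0) * Kc ε pf h w := by
  funext w
  simp only [pb]
  have hK : Kc ε pf h w = ∑ k : Fin n,
      if pf h.castSucc ≤ (k : ℕ) ∧ (k : ℕ) < pf h.succ then (ε k : ℂ) * Iact k w else 0 := rfl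
  rw [hK, Finset.mul_sum]
  apply Finset.sum_congr rfl
  intro k _
  rw [Dp_Wc ε pf h w k hε, Dx_Wbc ε pf j w k, Dx_Wc ε pf h w k, Dp_Wbc ε pf j w k hε]
  by_cases hhj : h = j
  · subst hhj
    simp only [if_pos rfl]
    by_cases hk : pf h.castSucc ≤ (k : ℕ) ∧ (k : ℕ) < pf h.succ
    · simp only [if_pos hk, Iact]
      rcases hε k with he | he
      · simp only [wfun, wbfun, he, if_pos, if_true, reduceIte, Int.cast_one]
        linear_combination (8 * Complex.I * zf k w * zbf k w : ℂ) * s2i_mul_s2i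
      · simp only [wfun, wbfun, he, Int.cast_neg, Int.cast_one,
          if_neg (show ¬(-1 : ℤ) = 1 by decide), if_true]
        linear_combination (-8 * Complex.I * zf k w * zbf k w : ℂ) * s2i_mul_s2i
    · simp only [if_neg hk]; ring
  · simp only [if_neg hhj]
    by_cases hk : pf h.castSucc ≤ (k : ℕ) ∧ (k : ℕ) < pf h.succ
    · have hk2 : ¬(pf j.castSucc ≤ (k : ℕ) ∧ (k : ℕ) < pf j.succ) := fun hc =>
        group_disj hpf hhj hk hc
      simp only [if_pos hk, if_neg hk2]; ring
    · simp only [if_neg hk]; ring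

end brackets

section pfbrackets
variable {n u : ℕ} (ε : Fin n → ℤ) (pf : Fin (u + 1) → ℕ)

lemma pb_Wc_Kc (hpf : StrictMono pf) (hε : ∀ i, ε i = 1 ∨ ε i = -1) (h j : Fin u) :
    pb (Wc ε pf h) (Kc ε pf j) =
    fun w => 2 * Complex.I * (if h = j then 1 else 0) * Wc ε pf h w := by
  funext w
  simp only [pb]
  have hW : Wc ε pf h w = ∑ k : Fin n,
      if pf h.castSucc ≤ (k : ℕ) ∧ (k : ℕ) < pf h.succ then (ε k : ℂ) * wfun ε k w ^ 2
      else 0 := rfl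
  rw [hW, Finset.mul_sum]
  apply Finset.sum_congr rfl
  intro k _
  rw [Dp_Wc ε pf h w k hε, Dx_Kc ε pf j w k, Dx_Wc ε pf h w k, Dp_Kc ε pf j w k]
  by_cases hhj : h = j
  · subst hhj
    simp only [if_pos rfl]
    by_cases hk : pf h.castSucc ≤ (k : ℕ) ∧ (k : ℕ) < pf h.succ
    · simp only [if_pos hk]
      rcases hε k with he | he
      · simp only [wfun, wbfun, he, if_pos, if_true, reduceIte, Int.cast_one]
        linear_combination (4 * Complex.I * zf k w ^ 2 : ℂ) * s2i_mul_s2i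
      · simp only [wfun, wbfun, he, Int.cast_neg, Int.cast_one,
          if_neg (show ¬(-1 : ℤ) = 1 by decide), if_true]
        linear_combination (-4 * Complex.I * zbf k w ^ 2 : ℂ) * s2i_mul_s2i
    · simp only [if_neg hk]; ring
  · simp only [if_neg hhj]
    by_cases hk : pf h.castSucc ≤ (k : ℕ) ∧ (k : ℕ) < pf h.succ
    · have hk2 : ¬(pf j.castSucc ≤ (k : ℕ) ∧ (k : ℕ) < pf j.succ) := fun hc =>
        group_disj hpf hhj hk hc
      simp only [if_pos hk, if_neg hk2]; ring
    · simp only [if_neg hk]; ring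

lemma pb_Wc_Pf (hpf : StrictMono pf) (hε : ∀ i, ε i = 1 ∨ ε i = -1) (h j : Fin u)
    (a b : Fin n) (ha : pf j.castSucc ≤ (a : ℕ)) (hab : a < b) (hb : (b : ℕ) < pf j.succ) :
    pb (Wc ε pf h) (Pf ε a b) = 0 := by
  have hab' : (a : ℕ) < (b : ℕ) := hab
  funext w
  simp only [pb, Pi.zero_apply]
  rw [← Finset.sum_subset (Finset.subset_univ ({a, b} : Finset (Fin n)))]
  · rw [Finset.sum_pair hab.ne]
    rw [Dp_Wc ε pf h w a hε, Dx_Wc ε pf h w a, Dp_Wc ε pf h w b hε, Dx_Wc ε pf h w b,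
      D_Pf ε w a b, D_Pf ε w a b, D_Pf ε w a b, D_Pf ε w a b]
    simp only [Lw_apply_x, Lwb_apply_x, Lw_apply_p ε hε, Lwb_apply_p ε hε,
      if_pos rfl, if_neg hab.ne, if_neg hab.ne']
    by_cases hhj : h = j
    · subst hhj
      have hca : pf h.castSucc ≤ (a : ℕ) ∧ (a : ℕ) < pf h.succ := ⟨ha, lt_trans hab' hb⟩
      have hcb : pf h.castSucc ≤ (b : ℕ) ∧ (b : ℕ) < pf h.succ := ⟨le_trans ha hab'.le, hb⟩
      simp only [if_pos hca, if_pos hcb]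
      rcases hε a with ha' | ha' <;> rcases hε b with hb' | hb' <;>
        simp only [wfun, wbfun, ha', hb', Int.cast_one, Int.cast_neg,
          if_neg (show ¬(-1 : ℤ) = 1 by decide), if_true, eq_self_iff_true, reduceIte] <;>
        ring
    · have hca : ¬(pf h.castSucc ≤ (a : ℕ) ∧ (a : ℕ) < pf h.succ) := fun hc =>
        group_disj hpf hhj hc ⟨ha, lt_trans hab' hb⟩
      have hcb : ¬(pf h.castSucc ≤ (b : ℕ) ∧ (b : ℕ) < pf h.succ) := fun hc =>
        group_disj hpf hhj hc ⟨le_trans ha hab'.le, hb⟩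
      simp only [if_neg hca, if_neg hcb]; ring
  · intro k _ hk
    simp only [Finset.mem_insert, Finset.mem_singleton, not_or] at hk
    obtain ⟨hka, hkb⟩ := hk
    rw [D_Pf ε w a b, D_Pf ε w a b]
    simp only [Lw_apply_x, Lwb_apply_x, Lw_apply_p ε hε, Lwb_apply_p ε hε,
      if_neg (Ne.symm hka), if_neg (Ne.symm hkb)]
    ring

lemma pb_Kc_Pf (hpf : StrictMono pf) (hε : ∀ i, ε i = 1 ∨ ε i = -1) (h j : Fin u)
    (a b : Fin n) (ha : pf j.castSucc ≤ (a : ℕ)) (hab : a < b) (hb : (b : ℕ) < pf j.succ) :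
    pb (Kc ε pf h) (Pf ε a b) = 0 := by
  have hab' : (a : ℕ) < (b : ℕ) := hab
  funext w
  simp only [pb, Pi.zero_apply]
  rw [← Finset.sum_subset (Finset.subset_univ ({a, b} : Finset (Fin n)))]
  · rw [Finset.sum_pair hab.ne]
    rw [Dp_Kc ε pf h w a, Dx_Kc ε pf h w a, Dp_Kc ε pf h w b, Dx_Kc ε pf h w b,
      D_Pf ε w a b, D_Pf ε w a b, D_Pf ε w a b, D_Pf ε w a b]
    simp only [Lw_apply_x, Lwb_apply_x, Lw_apply_p ε hε, Lwb_apply_p ε hε,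
      if_pos rfl, if_neg hab.ne, if_neg hab.ne']
    by_cases hhj : h = j
    · subst hhj
      have hca : pf h.castSucc ≤ (a : ℕ) ∧ (a : ℕ) < pf h.succ := ⟨ha, lt_trans hab' hb⟩
      have hcb : pf h.castSucc ≤ (b : ℕ) ∧ (b : ℕ) < pf h.succ := ⟨le_trans ha hab'.le, hb⟩
      simp only [if_pos hca, if_pos hcb]
      rcases hε a with ha' | ha' <;> rcases hε b with hb' | hb' <;>
        simp only [wfun, wbfun, ha', hb', Int.cast_one, Int.cast_neg,
          if_neg (show ¬(-1 : ℤ) = 1 by decide), if_true, eq_self_iff_true, reduceIte] <;>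
        ring
    · have hca : ¬(pf h.castSucc ≤ (a : ℕ) ∧ (a : ℕ) < pf h.succ) := fun hc =>
        group_disj hpf hhj hc ⟨ha, lt_trans hab' hb⟩
      have hcb : ¬(pf h.castSucc ≤ (b : ℕ) ∧ (b : ℕ) < pf h.succ) := fun hc =>
        group_disj hpf hhj hc ⟨le_trans ha hab'.le, hb⟩
      simp only [if_neg hca, if_neg hcb]; ring
  · intro k _ hk
    simp only [Finset.mem_insert, Finset.mem_singleton, not_or] at hk
    obtain ⟨hka, hkb⟩ := hk
    rw [D_Pf ε w a b, D_Pf ε w a b]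
    simp only [Lw_apply_x, Lwb_apply_x, Lw_apply_p ε hε, Lwb_apply_p ε hε,
      if_neg (Ne.symm hka), if_neg (Ne.symm hkb)]
    ring

end pfbrackets

lemma Wc_mul_Wbc {n u : ℕ} (ε : Fin n → ℤ) (pf : Fin (u + 1) → ℕ) (h : Fin u) (w : Phase n) :
    Wc ε pf h w * Wbc ε pf h w = Kc ε pf h w ^ 2 - Psqg ε pf h w := by
  classical
  set P : Fin n → Prop := fun i => pf h.castSucc ≤ (i : ℕ) ∧ (i : ℕ) < pf h.succ with hP
  set S : Finset (Fin n) := Finset.univ.filter P with hS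
  set A : Fin n → ℂ := fun i => (ε i : ℂ) * wfun ε i w ^ 2 with hA
  set B : Fin n → ℂ := fun i => (ε i : ℂ) * wbfun ε i w ^ 2 with hB
  set C : Fin n → ℂ := fun i => (ε i : ℂ) * Iact i w with hC
  set t : Fin n → Fin n → ℂ := fun i j => ((ε i * ε j : ℤ) : ℂ) * Pf ε i j w ^ 2 with ht
  have key : ∀ i j : Fin n, 2 * (C i * C j) = A i * B j + A j * B i + t i j := by
    intro i j
    simp only [hA, hB, hC, ht, Pf, Iact, wfun, wbfun]
    push_cast
    by_cases hi : ε i = 1 <;> by_cases hj : ε j = 1 <;>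
      simp only [hi, hj, if_true, if_false, eq_self_iff_true, reduceIte, if_pos, if_neg,
        Int.cast_one]
    · linear_combination (-(zf i w * zbf j w - zf j w * zbf i w)^2 : ℂ) * Complex.I_sq
    · linear_combination (-(ε j : ℂ) * (zf i w * zf j w - zbf j w * zbf i w)^2) * Complex.I_sq
    · linear_combination (-(ε i : ℂ) * (zbf i w * zbf j w - zf j w * zf i w)^2) * Complex.I_sq
    · linear_combination (-((ε i : ℂ) * (ε j : ℂ)) * (zbf i w * zf j w - zbf j w * zf i w)^2) *
        Complex.I_sq
  have e1 : Wc ε pf h w = ∑ i ∈ S, A i := by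
    rw [Wc, hS]; exact (Finset.sum_filter _ _).symm
  have e3 : Wbc ε pf h w = ∑ i ∈ S, B i := by
    rw [Wbc, hS]; exact (Finset.sum_filter _ _).symm
  have e2 : Kc ε pf h w = ∑ i ∈ S, C i := by
    rw [Kc, hS]; exact (Finset.sum_filter _ _).symm
  have hiff : ∀ i j : Fin n,
      (pf h.castSucc ≤ (i : ℕ) ∧ i < j ∧ (j : ℕ) < pf h.succ) ↔ (P i ∧ P j ∧ i < j) := by
    intro i j
    simp only [hP, Fin.lt_def]
    omega
  have e4 : Psqg ε pf h w = ∑ i ∈ S, ∑ j ∈ S, if i < j then t i j else 0 := by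
    rw [Psqg]
    calc (∑ i : Fin n, ∑ j : Fin n,
          if pf h.castSucc ≤ (i : ℕ) ∧ i < j ∧ (j : ℕ) < pf h.succ then
            ((ε i * ε j : ℤ) : ℂ) * Pf ε i j w ^ 2 else 0)
        = ∑ i : Fin n, ∑ j : Fin n,
            if P i then (if P j then (if i < j then t i j else 0) else 0) else 0 := by
          apply Finset.sum_congr rfl; intro i _; apply Finset.sum_congr rfl; intro j _
          rw [if_congr (hiff i j) rfl rfl]
          split_ifs <;> first | rfl | tauto
      _ = ∑ i : Fin n,
            if P i then (∑ j : Fin n, if P j then (if i < j then t i j else 0) else 0)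
            else 0 := by
          apply Finset.sum_congr rfl; intro i _
          by_cases hPi : P i <;> simp [hPi]
      _ = ∑ i ∈ S, ∑ j : Fin n, if P j then (if i < j then t i j else 0) else 0 :=
          (Finset.sum_filter _ _).symm
      _ = ∑ i ∈ S, ∑ j ∈ S, if i < j then t i j else 0 := by
          apply Finset.sum_congr rfl; intro i _
          exact (Finset.sum_filter _ _).symm
  have f4 : (∑ i ∈ S, ∑ j ∈ S, A j * B i) = ∑ i ∈ S, ∑ j ∈ S, A i * B j :=
    Finset.sum_comm
  have f8 : 2 * ((∑ i ∈ S, C i) * (∑ i ∈ S, C i)) =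
      (∑ i ∈ S, ∑ j ∈ S, A i * B j) + (∑ i ∈ S, ∑ j ∈ S, A j * B i) +
      (∑ i ∈ S, ∑ j ∈ S, t i j) := by
    rw [Finset.sum_mul_sum]
    simp only [Finset.mul_sum, ← Finset.sum_add_distrib]
    apply Finset.sum_congr rfl; intro i _; apply Finset.sum_congr rfl; intro j _
    exact key i j
  have f5 : (∑ i ∈ S, ∑ j ∈ S, t i j) =
      (∑ i ∈ S, ∑ j ∈ S, if i < j then t i j else 0) +
      (∑ i ∈ S, ∑ j ∈ S, if j < i then t i j else 0) +
      (∑ i ∈ S, ∑ j ∈ S, if i = j then t i j else 0) := by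
    simp only [← Finset.sum_add_distrib]
    apply Finset.sum_congr rfl; intro i _; apply Finset.sum_congr rfl; intro j _
    rcases lt_trichotomy i j with hh | hh | hh
    · simp [hh, asymm hh, hh.ne]
    · subst hh; simp [lt_irrefl]
    · simp [hh, asymm hh, ne_of_gt hh]
  have f6 : (∑ i ∈ S, ∑ j ∈ S, if j < i then t i j else 0) =
      ∑ i ∈ S, ∑ j ∈ S, if i < j then t i j else 0 := by
    rw [Finset.sum_comm]
    apply Finset.sum_congr rfl; intro i _; apply Finset.sum_congr rfl; intro j _
    by_cases hij : i < j
    · rw [if_pos hij, if_pos hij]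
      simp only [ht, Pf]
      push_cast
      ring
    · rw [if_neg hij, if_neg hij]
  have f7 : (∑ i ∈ S, ∑ j ∈ S, if i = j then t i j else 0) = 0 := by
    apply Finset.sum_eq_zero; intro i _
    rw [Finset.sum_ite_eq]
    split <;> simp [ht, Pf]
  rw [e1, e3, Finset.sum_mul_sum, e2, pow_two, e4]
  linear_combination (-(1:ℂ)/2) * f8 + (-(1:ℂ)/2) * f4 + (-(1:ℂ)/2) * f5 +
    (-(1:ℂ)/2) * f6 + (-(1:ℂ)/2) * f7


/-- `{W_h, W_j} = 0`, `{W_h, W̄_j} = 4i δ_{hj} K_h`,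
`{W_h, K_j} = 2i δ_{hj} W_h`, `{W_h, P_{ab}} = {K_h, P_{ab}} = 0` for momenta `P_{ab}`
within a group, and `W_h W̄_h = K_h² − P_{(h)}²`. -/
theorem statement7 (n u : ℕ)
    (pf : Fin (u + 1) → ℕ) (hpf : StrictMono pf) (hpf0 : pf 0 = 0)
    (hpfn : pf (Fin.last u) = n)
    (ε : Fin n → ℤ) (hε : ∀ i, ε i = 1 ∨ ε i = -1) :
    ∀ h j : Fin u,
      pb (Wc ε pf h) (Wc ε pf j) = 0 ∧
      (pb (Wc ε pf h) (Wbc ε pf j) =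
        fun w => 4 * Complex.I * (if h = j then 1 else 0) * Kc ε pf h w) ∧
      (pb (Wc ε pf h) (Kc ε pf j) =
        fun w => 2 * Complex.I * (if h = j then 1 else 0) * Wc ε pf h w) ∧
      (∀ a b : Fin n, pf j.castSucc ≤ (a : ℕ) → a < b → (b : ℕ) < pf j.succ →
        pb (Wc ε pf h) (Pf ε a b) = 0 ∧ pb (Kc ε pf h) (Pf ε a b) = 0) ∧
      (∀ w : Phase n, Wc ε pf h w * Wbc ε pf h w = Kc ε pf h w ^ 2 - Psqg ε pf h w) := by
  intro h j
  refine ⟨pb_Wc_Wc ε pf hε h j, pb_Wc_Wbc ε pf hpf hε h j, pb_Wc_Kc ε pf hpf hε h j,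
    fun a b ha hab hb => ⟨pb_Wc_Pf ε pf hpf hε h j a b ha hab hb,
      pb_Kc_Pf ε pf hpf hε h j a b ha hab hb⟩,
    fun w => Wc_mul_Wbc ε pf h w⟩

end
end
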